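/- arXiv:2502.02108 — 6 statements merged into one kernel-verified Lean document; each statement's English description precedes it below -/
import Mathlib

section
/- Let e be a twist on the finite G-set X. Then the 𝕜-module R_G(X×X), equipped with the twisted convolution product (f*g)(x,y) := Σ_{z∈X} f(x,z)·e(z)^{-1}·g(z,y), is a unital associative 𝕜-algebra: the convolution of two G-equivariant functions is again G-equivariant, the product is 𝕜-bilinear and associative, and the element 1_X defined by 1_X(x,y) = δ_{x,y}·e(x) is a two-sided unit. -/
/-!
Twisted convolution algebras: `R_G(X×X)` with the twisted convolution product
`(f*g)(x,y) = ∑_z f(x,z)·e(z)⁻¹·g(z,y)` is a unital associative 𝕜-algebra.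
-/

open Finset

/-- A `G`-equivariant function on a `G`-set. -/
def Equivariant1 (G : Type*) {X R : Type*} [SMul G X] [SMul G R] (e : X → R) : Prop :=
  ∀ (g : G) (x : X), e (g • x) = g • e x

/-- A `G`-equivariant function on `X × X` (diagonal action), written with two arguments. -/
def Equivariant2 (G : Type*) {X R : Type*} [SMul G X] [SMul G R] (f : X → X → R) : Prop :=
  ∀ (g : G) (x y : X), f (g • x) (g • y) = g • f x y

/-- The twisted convolution product with twist `e`. -/
noncomputable def tconv {X R : Type*} [Ring R] [Fintype X] (e : X → R)
    (f g : X → X → R) : X → X → R :=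
  fun x y => ∑ z, f x z * Ring.inverse (e z) * g z y

/-- The proposed unit `1_X (x,y) = δ_{x,y} e(x)`. -/
noncomputable def oneX {X R : Type*} [Ring R] [DecidableEq X] (e : X → R) : X → X → R :=
  fun x y => if x = y then e x else 0


lemma smul_ringInverse {G R : Type*} [Group G] [Ring R] [MulSemiringAction G R]
    (g : G) {a : R} (ha : IsUnit a) :
    Ring.inverse (g • a) = g • Ring.inverse a := by
  obtain ⟨u, rfl⟩ := ha
  have h1 : (g • (u : R)) * (g • ((u⁻¹ : Rˣ) : R)) = 1 := by
    rw [← smul_mul', Units.mul_inv, smul_one]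
  have h2 : (g • ((u⁻¹ : Rˣ) : R)) * (g • (u : R)) = 1 := by
    rw [← smul_mul', Units.inv_mul, smul_one]
  let w : Rˣ := ⟨g • (u : R), g • ((u⁻¹ : Rˣ) : R), h1, h2⟩
  have : Ring.inverse (w : R) = ((w⁻¹ : Rˣ) : R) := Ring.inverse_unit w
  simpa [w, Ring.inverse_unit] using this

theorem stmt0 {k G R X : Type*} [Field k] [Group G] [Ring R] [Algebra k R]
    [MulSemiringAction G R] [SMulCommClass G k R]
    [Fintype X] [DecidableEq X] [MulAction G X]
    (e : X → R) (heq : Equivariant1 G e) (hu : ∀ x, IsUnit (e x)) :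
    -- the convolution of two equivariant functions is equivariant
    (∀ f g : X → X → R, Equivariant2 G f → Equivariant2 G g →
        Equivariant2 G (tconv e f g)) ∧
    -- the product is 𝕜-bilinear
    (∀ (c : k) (f f' g : X → X → R),
        tconv e (c • f + f') g = c • tconv e f g + tconv e f' g) ∧
    (∀ (c : k) (f g g' : X → X → R),
        tconv e f (c • g + g') = c • tconv e f g + tconv e f g') ∧
    -- the product is associative
    (∀ f g h : X → X → R, tconv e (tconv e f g) h = tconv e f (tconv e g h)) ∧
    -- `1_X` is equivariant and is a two-sided unit
    Equivariant2 G (oneX e) ∧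
    (∀ f : X → X → R, tconv e (oneX e) f = f ∧ tconv e f (oneX e) = f) := by
  refine ⟨?_, ?_, ?_, ?_, ?_, ?_⟩
  · intro f g hf hg gG x y
    unfold tconv
    rw [smul_sum]
    refine (Fintype.sum_equiv (MulAction.toPerm gG) _ _ (fun z => ?_)).symm
    simp only [MulAction.toPerm_apply]
    rw [hf, hg, heq, smul_ringInverse gG (hu z), smul_mul', smul_mul']
  · intro c f f' g
    funext x y
    simp only [tconv, Pi.add_apply, Pi.smul_apply, add_mul, smul_mul_assoc, smul_sum,
      Finset.sum_add_distrib]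
  · intro c f g g'
    funext x y
    simp only [tconv, Pi.add_apply, Pi.smul_apply, mul_add, mul_smul_comm, smul_sum,
      Finset.sum_add_distrib]
  · intro f g h
    funext x y
    simp only [tconv, Finset.sum_mul, Finset.mul_sum]
    rw [Finset.sum_comm]
    exact Finset.sum_congr rfl fun z _ => Finset.sum_congr rfl fun w _ => by simp [mul_assoc]
  · intro gG x y
    unfold oneX
    by_cases hxy : x = y
    · simp [hxy, heq gG y]
    · simp [hxy, fun h => hxy (smul_left_cancel gG h)]
  · intro f
    constructor <;> funext x y
    · rw [tconv, Finset.sum_eq_single x]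
      · simp [oneX, Ring.mul_inverse_cancel _ (hu x)]
      · intro z _ hz; simp [oneX, (Ne.symm hz)]
      · simp
    · rw [tconv, Finset.sum_eq_single y]
      · simp [oneX, mul_assoc, Ring.inverse_mul_cancel _ (hu y)]
      · intro z _ hz; simp [oneX, hz]
      · simp
end

section
/- Assume R is free as a 𝕜-module and let e be a twist on the finite G-set X. Choose a set Π of representatives of the G-orbits on X×X, and for each π = (x_π, y_π) ∈ Π let Stab_G(π) ≤ G be its stabilizer and let B^π be a 𝕜-basis of the invariant subring R^{Stab_G(π)} = {r ∈ R : h(r) = r for all h ∈ Stab_G(π)}. For π ∈ Π and r ∈ R^{Stab_G(π)}, define ξ_{π,r} ∈ R_G(X×X) by ξ_{π,r}(x,y) = Σ_{g ∈ G/Stab_G(π)} δ_{g·π,(x,y)}·e(x)·g(r) (the summand depends only on the coset of g). Then the collection {ξ_{π,r} : π ∈ Π, r ∈ B^π} is a 𝕜-basis of R_G(X×X). -/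
/-!
The characteristic-type functions `ξ_{π,r}` form a 𝕜-basis of the module of
`G`-equivariant `R`-valued functions on `X × X`.
-/

open Finset

variable (k : Type*) (G : Type*) {R X : Type*}

/-- The `𝕜`-submodule of `H`-invariants `R^H` of `R`, for a subgroup `H ≤ G`. -/
def invariants [Field k] [Group G] [Ring R] [Algebra k R]
    [MulSemiringAction G R] [SMulCommClass G k R] (H : Subgroup G) : Submodule k R where
  carrier := {r : R | ∀ h : G, h ∈ H → h • r = r}
  add_mem' := by
    intro a b ha hb h hh
    rw [smul_add, ha h hh, hb h hh]
  zero_mem' := by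
    intro h hh
    exact smul_zero h
  smul_mem' := by
    intro c r hr h hh
    rw [smul_comm, hr h hh]

/-- The `𝕜`-submodule `R_G(X×X)` of `G`-equivariant functions `X → X → R`. -/
def equivSubmodule [Field k] [Group G] [Ring R] [Algebra k R]
    [MulSemiringAction G R] [SMulCommClass G k R] [MulAction G X] :
    Submodule k (X → X → R) where
  carrier := {f : X → X → R | Equivariant2 G f}
  add_mem' := by
    intro f f' hf hf' g x y
    show f (g • x) (g • y) + f' (g • x) (g • y) = g • (f x y + f' x y)
    rw [hf g x y, hf' g x y, smul_add]
  zero_mem' := by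
    intro g x y
    exact (smul_zero g).symm
  smul_mem' := by
    intro c f hf g x y
    show c • f (g • x) (g • y) = g • (c • f x y)
    rw [hf g x y]
    exact (smul_comm g c (f x y)).symm

theorem stmt1 [Field k] [Group G] [Fintype G] [Ring R] [Algebra k R]
    [MulSemiringAction G R] [SMulCommClass G k R]
    [Fintype X] [DecidableEq X] [MulAction G X]
    (hfree : Module.Free k R)
    (e : X → R) (heq : Equivariant1 G e) (hu : ∀ x, IsUnit (e x))
    -- `Π` is a set of representatives of the `G`-orbits on `X × X`
    (Reps : Set (X × X))
    (hrep : ∀ p : X × X, ∃ π ∈ Reps, p ∈ MulAction.orbit G π)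
    (hdist : ∀ π ∈ Reps, ∀ π' ∈ Reps, π' ∈ MulAction.orbit G π → π = π')
    -- for each `π`, a `𝕜`-basis `Bb π` of the invariant subring `R^{Stab_G(π)}`
    (ι : (X × X) → Type*) (Bb : ∀ π : X × X, ι π → R)
    (hBinv : ∀ π ∈ Reps, ∀ i : ι π, Bb π i ∈ invariants k G (MulAction.stabilizer G π))
    (hBli : ∀ π ∈ Reps, LinearIndependent k (Bb π))
    (hBspan : ∀ π ∈ Reps, Submodule.span k (Set.range (Bb π)) =
        invariants k G (MulAction.stabilizer G π))
    -- the functions `ξ_{π,r}`, characterized by their values: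
    -- `ξ_{π,r}(g•π) = e(g•π₁)·g(r)` on the orbit of `π` and `0` elsewhere
    (ξ : (X × X) → R → (X → X → R))
    (hξ_orbit : ∀ π ∈ Reps, ∀ r : R, r ∈ invariants k G (MulAction.stabilizer G π) →
        ∀ g : G, ξ π r (g • π.1) (g • π.2) = e (g • π.1) * (g • r))
    (hξ_off : ∀ π ∈ Reps, ∀ (r : R) (x y : X),
        (x, y) ∉ MulAction.orbit G π → ξ π r x y = 0) :
    -- conclusion: `{ξ_{π,r} : π ∈ Π, r ∈ B^π}` is a `𝕜`-basis of `R_G(X×X)`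
    LinearIndependent k
      (fun q : (Σ π : Reps, ι (π : X × X)) => ξ (q.1 : X × X) (Bb (q.1 : X × X) q.2)) ∧
    Submodule.span k
      (Set.range fun q : (Σ π : Reps, ι (π : X × X)) => ξ (q.1 : X × X) (Bb (q.1 : X × X) q.2)) =
      equivSubmodule k G := by

  classical
  -- uniqueness of orbit representatives
  have huniq : ∀ π ∈ Reps, ∀ π' ∈ Reps, ∀ p : X × X,
      p ∈ MulAction.orbit G π → p ∈ MulAction.orbit G π' → π = π' := by
    intro π hπ π' hπ' p hp hp'
    obtain ⟨g, hg⟩ := hp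
    obtain ⟨g', hg'⟩ := hp'
    replace hg : g • π = p := hg
    replace hg' : g' • π' = p := hg'
    refine hdist π hπ π' hπ' ⟨g'⁻¹ * g, ?_⟩
    show (g'⁻¹ * g) • π = π'
    rw [mul_smul, hg, ← hg', inv_smul_smul]
  -- value of ξ on the orbit, in a convenient form
  have hval : ∀ π ∈ Reps, ∀ r ∈ invariants k G (MulAction.stabilizer G π),
      ∀ (g : G) (x y : X), x = g • π.1 → y = g • π.2 → ξ π r x y = e x * g • r := by
    intro π hπ r hr g x y hx hy
    subst hx; subst hy
    exact hξ_orbit π hπ r hr g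
  -- membership in the orbit, componentwise
  have hmem : ∀ (π : X × X) (x y : X),
      (x, y) ∈ MulAction.orbit G π ↔ ∃ g : G, x = g • π.1 ∧ y = g • π.2 := by
    intro π x y
    constructor
    · rintro ⟨g, hg⟩
      replace hg : g • π = (x, y) := hg
      exact ⟨g, (congrArg Prod.fst hg).symm, (congrArg Prod.snd hg).symm⟩
    · rintro ⟨g, hx, hy⟩
      exact ⟨g, by rw [Prod.ext_iff]; exact ⟨hx.symm, hy.symm⟩⟩
  -- the base point is in its own orbit
  have hself : ∀ π : X × X, (π.1, π.2) ∈ MulAction.orbit G π := by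
    intro π
    exact ⟨1, by simp⟩
  -- value of ξ at the base point
  have hbase : ∀ π ∈ Reps, ∀ r ∈ invariants k G (MulAction.stabilizer G π),
      ξ π r π.1 π.2 = e π.1 * r := by
    intro π hπ r hr
    have := hval π hπ r hr 1 π.1 π.2 (by simp) (by simp)
    simpa using this
  -- additivity of ξ in the invariant argument
  have hadd : ∀ π ∈ Reps, ∀ r ∈ invariants k G (MulAction.stabilizer G π),
      ∀ r' ∈ invariants k G (MulAction.stabilizer G π),
      ξ π (r + r') = ξ π r + ξ π r' := by
    intro π hπ r hr r' hr'
    funext x y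
    by_cases h : (x, y) ∈ MulAction.orbit G π
    · obtain ⟨g, hx, hy⟩ := (hmem π x y).mp h
      have h1 := hval π hπ r hr g x y hx hy
      have h2 := hval π hπ r' hr' g x y hx hy
      have h3 := hval π hπ (r + r') (Submodule.add_mem _ hr hr') g x y hx hy
      show ξ π (r + r') x y = ξ π r x y + ξ π r' x y
      rw [h1, h2, h3, smul_add, mul_add]
    · show ξ π (r + r') x y = ξ π r x y + ξ π r' x y
      rw [hξ_off π hπ r x y h, hξ_off π hπ r' x y h, hξ_off π hπ (r + r') x y h, add_zero]
  -- homogeneity of ξ in the invariant argument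
  have hsmul : ∀ π ∈ Reps, ∀ r ∈ invariants k G (MulAction.stabilizer G π), ∀ c : k,
      ξ π (c • r) = c • ξ π r := by
    intro π hπ r hr c
    funext x y
    by_cases h : (x, y) ∈ MulAction.orbit G π
    · obtain ⟨g, hx, hy⟩ := (hmem π x y).mp h
      have h1 := hval π hπ r hr g x y hx hy
      have h2 := hval π hπ (c • r) (Submodule.smul_mem _ c hr) g x y hx hy
      show ξ π (c • r) x y = c • ξ π r x y
      rw [h1, h2, smul_comm g c r, mul_smul_comm]
    · show ξ π (c • r) x y = c • ξ π r x y
      rw [hξ_off π hπ r x y h, hξ_off π hπ (c • r) x y h, smul_zero]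
  -- ξ π 0 = 0
  have hzero : ∀ π ∈ Reps, ξ π (0 : R) = 0 := by
    intro π hπ
    funext x y
    by_cases h : (x, y) ∈ MulAction.orbit G π
    · obtain ⟨g, hx, hy⟩ := (hmem π x y).mp h
      have h1 := hval π hπ (0 : R) (Submodule.zero_mem _) g x y hx hy
      show ξ π (0 : R) x y = 0
      rw [h1, smul_zero, mul_zero]
    · exact hξ_off π hπ 0 x y h
  -- ξ π r is equivariant
  have hequi : ∀ π ∈ Reps, ∀ r ∈ invariants k G (MulAction.stabilizer G π),
      ξ π r ∈ equivSubmodule k G (X := X) (R := R) := by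
    intro π hπ r hr h x y
    by_cases hxy : (x, y) ∈ MulAction.orbit G π
    · obtain ⟨g, hx, hy⟩ := (hmem π x y).mp hxy
      have h1 := hval π hπ r hr g x y hx hy
      have h2 := hval π hπ r hr (h * g) (h • x) (h • y)
        (by rw [hx, mul_smul]) (by rw [hy, mul_smul])
      rw [h1, h2, smul_mul', heq h x, mul_smul]
    · have hxy2 : (h • x, h • y) ∉ MulAction.orbit G π := by
        intro hc
        obtain ⟨g, hx, hy⟩ := (hmem π (h • x) (h • y)).mp hc
        exact hxy ((hmem π x y).mpr ⟨h⁻¹ * g, by rw [mul_smul, ← hx, inv_smul_smul],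
          by rw [mul_smul, ← hy, inv_smul_smul]⟩)
      rw [hξ_off π hπ r x y hxy, hξ_off π hπ r (h • x) (h • y) hxy2, smul_zero]
  constructor
  · -- linear independence
    rw [linearIndependent_iff']
    intro s c hsum q0 hq0
    obtain ⟨π0, i0⟩ := q0
    -- evaluate the vanishing sum at the base point of π0
    have hsum2 : ∑ q ∈ s, c q • ξ (q.1 : X × X) (Bb (q.1 : X × X) q.2) (π0 : X × X).1
        (π0 : X × X).2 = 0 := by
      have := congrFun (congrFun hsum (π0 : X × X).1) (π0 : X × X).2
      simpa using this
    -- restrict the sum to the terms with first component π0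
    have hf_inj : Set.InjOn (fun i : ι (π0 : X × X) => (⟨π0, i⟩ : Σ π : Reps, ι (π : X × X)))
        ((fun i : ι (π0 : X × X) => (⟨π0, i⟩ : Σ π : Reps, ι (π : X × X))) ⁻¹' ↑s) := by
      intro a _ b _ hab
      exact eq_of_heq (Sigma.mk.inj_iff.mp hab).2
    have hvanish : ∀ q ∈ s, q ∉ Set.range
        (fun i : ι (π0 : X × X) => (⟨π0, i⟩ : Σ π : Reps, ι (π : X × X))) →
        c q • ξ (q.1 : X × X) (Bb (q.1 : X × X) q.2) (π0 : X × X).1 (π0 : X × X).2 = 0 := by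
      intro q _ hq
      have hne : (q.1 : X × X) ≠ (π0 : X × X) := by
        intro hc
        apply hq
        obtain ⟨π, i⟩ := q
        have : π = π0 := Subtype.ext hc
        subst this
        exact ⟨i, rfl⟩
      have hoff : ((π0 : X × X).1, (π0 : X × X).2) ∉ MulAction.orbit G (q.1 : X × X) := by
        intro hc
        exact hne (huniq (q.1 : X × X) q.1.2 (π0 : X × X) π0.2 _ hc (hself _))
      rw [hξ_off _ q.1.2 _ _ _ hoff, smul_zero]
    rw [← Finset.sum_preimage
      (fun i : ι (π0 : X × X) => (⟨π0, i⟩ : Σ π : Reps, ι (π : X × X))) s hf_inj _ hvanish]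
      at hsum2
    have hsum3 : (e (π0 : X × X).1) *
        ∑ i ∈ s.preimage _ hf_inj, c ⟨π0, i⟩ • Bb (π0 : X × X) i = 0 := by
      rw [Finset.mul_sum, ← hsum2]
      refine Finset.sum_congr rfl fun i _ => ?_
      rw [hbase (π0 : X × X) π0.2 _ (hBinv _ π0.2 i), mul_smul_comm]
    have hsum4 : ∑ i ∈ s.preimage _ hf_inj, c ⟨π0, i⟩ • Bb (π0 : X × X) i = 0 :=
      ((hu (π0 : X × X).1).mul_right_eq_zero).mp hsum3
    have := linearIndependent_iff'.mp (hBli (π0 : X × X) π0.2) _ _ hsum4 i0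
      (by rwa [Finset.mem_preimage])
    exact this
  · -- spanning
    apply le_antisymm
    · rw [Submodule.span_le]
      rintro _ ⟨q, rfl⟩
      exact hequi _ q.1.2 _ (hBinv _ q.1.2 q.2)
    · intro f hf
      -- f is equivariant
      have hfe : Equivariant2 G f := hf
      haveI : Fintype Reps := Set.Finite.fintype (Set.toFinite Reps)
      -- the invariant element attached to each representative
      set r : Reps → R := fun π => ↑(hu (π : X × X).1).unit⁻¹ * f (π : X × X).1 (π : X × X).2
        with hr_def
      have hstabfix : ∀ (π : Reps) (h : G), h ∈ MulAction.stabilizer G (π : X × X) →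
          h • (π : X × X).1 = (π : X × X).1 ∧ h • (π : X × X).2 = (π : X × X).2 := by
        intro π h hh
        have : h • (π : X × X) = (π : X × X) := hh
        exact ⟨congrArg Prod.fst this, congrArg Prod.snd this⟩
      have hefix : ∀ (π : Reps) (h : G), h ∈ MulAction.stabilizer G (π : X × X) →
          h • e (π : X × X).1 = e (π : X × X).1 := by
        intro π h hh
        rw [← heq h, (hstabfix π h hh).1]
      have hinvfix : ∀ (π : Reps) (h : G), h ∈ MulAction.stabilizer G (π : X × X) →
          h • (↑(hu (π : X × X).1).unit⁻¹ : R) = ↑(hu (π : X × X).1).unit⁻¹ := by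
        intro π h hh
        have hu1 : (↑(hu (π : X × X).1).unit⁻¹ : R) * e (π : X × X).1 = 1 :=
          (hu (π : X × X).1).val_inv_mul
        have hu2 : e (π : X × X).1 * (↑(hu (π : X × X).1).unit⁻¹ : R) = 1 :=
          (hu (π : X × X).1).mul_val_inv
        have h1 : (h • (↑(hu (π : X × X).1).unit⁻¹ : R)) * e (π : X × X).1 = 1 := by
          calc (h • (↑(hu (π : X × X).1).unit⁻¹ : R)) * e (π : X × X).1
              = h • (↑(hu (π : X × X).1).unit⁻¹ : R) * h • e (π : X × X).1 := by
                rw [hefix π h hh]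
            _ = h • ((↑(hu (π : X × X).1).unit⁻¹ : R) * e (π : X × X).1) := (smul_mul' _ _ _).symm
            _ = 1 := by rw [hu1, smul_one]
        calc h • (↑(hu (π : X × X).1).unit⁻¹ : R)
            = h • (↑(hu (π : X × X).1).unit⁻¹ : R) *
              (e (π : X × X).1 * ↑(hu (π : X × X).1).unit⁻¹) := by rw [hu2, mul_one]
          _ = (h • (↑(hu (π : X × X).1).unit⁻¹ : R) * e (π : X × X).1) *
              ↑(hu (π : X × X).1).unit⁻¹ := by rw [mul_assoc]
          _ = ↑(hu (π : X × X).1).unit⁻¹ := by rw [h1, one_mul]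
      have hrinv : ∀ π : Reps, r π ∈ invariants k G (MulAction.stabilizer G (π : X × X)) := by
        intro π h hh
        show h • (↑(hu (π : X × X).1).unit⁻¹ * f (π : X × X).1 (π : X × X).2) = _
        rw [smul_mul', hinvfix π h hh]
        congr 1
        rw [← hfe h, (hstabfix π h hh).1, (hstabfix π h hh).2]
      -- f is the sum of the ξ (π, r π)
      have hdecomp : f = ∑ π : Reps, ξ (π : X × X) (r π) := by
        funext x y
        obtain ⟨π0', hπ0', hp⟩ := hrep (x, y)
        obtain ⟨g, hx, hy⟩ := (hmem π0' x y).mp hp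
        set π0 : Reps := ⟨π0', hπ0'⟩ with hπ0
        have hsum : (∑ π : Reps, ξ (π : X × X) (r π)) x y
            = ξ (π0 : X × X) (r π0) x y := by
          rw [Finset.sum_apply, Finset.sum_apply]
          refine Finset.sum_eq_single π0 (fun π _ hne => ?_) (fun h => absurd (Finset.mem_univ _) h)
          have hoff : (x, y) ∉ MulAction.orbit G (π : X × X) := by
            intro hc
            exact hne (Subtype.ext (huniq (π : X × X) π.2 π0' hπ0' (x, y) hc hp))
          exact hξ_off _ π.2 _ x y hoff
        rw [hsum, hval (π0 : X × X) π0.2 (r π0) (hrinv π0) g x y hx hy]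
        -- now compute f x y
        have : f x y = g • f (π0 : X × X).1 (π0 : X × X).2 := by
          rw [hx, hy]; exact hfe g _ _
        rw [this, hr_def]
        have hfix : f (π0 : X × X).1 (π0 : X × X).2
            = e (π0 : X × X).1 * (↑(hu (π0 : X × X).1).unit⁻¹ * f (π0 : X × X).1 (π0 : X × X).2) := by
          rw [← mul_assoc, (hu (π0 : X × X).1).mul_val_inv, one_mul]
        calc g • f (π0 : X × X).1 (π0 : X × X).2
            = g • (e (π0 : X × X).1 * (↑(hu (π0 : X × X).1).unit⁻¹ *
              f (π0 : X × X).1 (π0 : X × X).2)) := by rw [← hfix]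
          _ = (g • e (π0 : X × X).1) * g • (↑(hu (π0 : X × X).1).unit⁻¹ *
              f (π0 : X × X).1 (π0 : X × X).2) := smul_mul' _ _ _
          _ = e x * g • (↑(hu (π0 : X × X).1).unit⁻¹ *
              f (π0 : X × X).1 (π0 : X × X).2) := by rw [← heq g, ← hx]
      -- each ξ (π, r π) is in the span
      have hmemspan : ∀ π : Reps, ξ (π : X × X) (r π) ∈ Submodule.span k
          (Set.range fun q : (Σ π : Reps, ι (π : X × X)) =>
            ξ (q.1 : X × X) (Bb (q.1 : X × X) q.2)) := by
        intro π
        have hrspan : r π ∈ Submodule.span k (Set.range (Bb (π : X × X))) := by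
          rw [hBspan (π : X × X) π.2]
          exact hrinv π
        -- span induction
        refine Submodule.span_induction (p := fun z hz => ξ (π : X × X) z ∈ Submodule.span k
          (Set.range fun q : (Σ π : Reps, ι (π : X × X)) =>
            ξ (q.1 : X × X) (Bb (q.1 : X × X) q.2))) ?_ ?_ ?_ ?_ hrspan
        · rintro z ⟨i, rfl⟩
          exact Submodule.subset_span ⟨⟨π, i⟩, rfl⟩
        · show ξ (π : X × X) (0 : R) ∈ _
          rw [hzero (π : X × X) π.2]
          exact Submodule.zero_mem _
        · intro a b ha hb iha ihb
          have ha' : a ∈ invariants k G (MulAction.stabilizer G (π : X × X)) := by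
            rw [← hBspan (π : X × X) π.2]; exact ha
          have hb' : b ∈ invariants k G (MulAction.stabilizer G (π : X × X)) := by
            rw [← hBspan (π : X × X) π.2]; exact hb
          show ξ (π : X × X) (a + b) ∈ _
          rw [hadd (π : X × X) π.2 a ha' b hb']
          exact Submodule.add_mem _ iha ihb
        · intro c a ha iha
          have ha' : a ∈ invariants k G (MulAction.stabilizer G (π : X × X)) := by
            rw [← hBspan (π : X × X) π.2]; exact ha
          show ξ (π : X × X) (c • a) ∈ _
          rw [hsmul (π : X × X) π.2 a ha' c]
          exact Submodule.smul_mem _ c iha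
      rw [hdecomp]
      exact Submodule.sum_mem _ fun π _ => hmemspan π
end

section
/- Let p : X → Y be a surjective G-equivariant map of finite G-sets, with twists e_X on X and e_Y on Y, and let S ∈ R_G(X×Y), M ∈ R_G(Y×X) be the associated split and merge, S(x,y) = δ_{p(x),y}·e_Y(y), M(y,x) = δ_{y,p(x)}·e_Y(y). Let t ∈ R_G(Y) and assume every value of t commutes in R with every value of e_X and of e_Y. Define t_Y ∈ R_G(Y×Y) by t_Y(y,y') = δ_{y,y'}·e_Y(y)·t(y), and t̃_X ∈ R_G(X×X) by t̃_X(x,x') = δ_{x,x'}·e_X(x)·t(p(x)). Then t_Y*M = M*t̃_X and S*t_Y = t̃_X*S (convolutions twisted by the twist of the middle set). -/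
/-!
Polynomials past splits and merges: `t_Y * M = M * t̃_X` and `S * t_Y = t̃_X * S`.
-/

open Finset

/-- The split associated to `p : X → Y`: `S(x,y) = δ_{p(x),y}·e_Y(y)`. -/
noncomputable def split {X Y R : Type*} [Ring R] [DecidableEq Y] (p : X → Y) (eY : Y → R) :
    X → Y → R :=
  fun x y => if p x = y then eY y else 0

/-- The merge associated to `p : X → Y`: `M(y,x) = δ_{y,p(x)}·e_Y(y)`. -/
noncomputable def merge {X Y R : Type*} [Ring R] [DecidableEq Y] (p : X → Y) (eY : Y → R) :
    Y → X → R :=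
  fun y x => if y = p x then eY y else 0

/-- The diagonal element `t_Y(y,y') = δ_{y,y'}·e_Y(y)·t(y)` on `Y`. -/
noncomputable def diagY {Y R : Type*} [Ring R] [DecidableEq Y] (eY : Y → R) (t : Y → R) :
    Y → Y → R :=
  fun y y' => if y = y' then eY y * t y else 0

/-- The diagonal element `t̃_X(x,x') = δ_{x,x'}·e_X(x)·t(p(x))` on `X`. -/
noncomputable def diagX {X Y R : Type*} [Ring R] [DecidableEq X] (p : X → Y)
    (eX : X → R) (t : Y → R) : X → X → R :=
  fun x x' => if x = x' then eX x * t (p x) else 0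

theorem stmt4 {k G R X Y : Type*} [Field k] [Group G] [Ring R] [Algebra k R]
    [MulSemiringAction G R] [SMulCommClass G k R]
    [Fintype X] [DecidableEq X] [MulAction G X]
    [Fintype Y] [DecidableEq Y] [MulAction G Y]
    (p : X → Y) (hps : Function.Surjective p)
    (hpe : ∀ (g : G) (x : X), p (g • x) = g • p x)
    (eX : X → R) (heX : Equivariant1 G eX) (huX : ∀ x, IsUnit (eX x))
    (eY : Y → R) (heY : Equivariant1 G eY) (huY : ∀ y, IsUnit (eY y))
    (t : Y → R) (ht : Equivariant1 G t)
    (htX : ∀ (y : Y) (x : X), t y * eX x = eX x * t y)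
    (htY : ∀ (y y' : Y), t y * eY y' = eY y' * t y) :
    -- `t_Y * M = M * t̃_X` (middle twists `e_Y` resp. `e_X`)
    (∀ (y : Y) (x : X),
      (∑ y', diagY eY t y y' * Ring.inverse (eY y') * merge p eY y' x) =
        (∑ x', merge p eY y x' * Ring.inverse (eX x') * diagX p eX t x' x)) ∧
    -- `S * t_Y = t̃_X * S` (middle twists `e_Y` resp. `e_X`)
    (∀ (x : X) (y : Y),
      (∑ y', split p eY x y' * Ring.inverse (eY y') * diagY eY t y' y) =
        (∑ x', diagX p eX t x x' * Ring.inverse (eX x') * split p eY x' y)) := by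
  have hY1 : ∀ y, eY y * Ring.inverse (eY y) = 1 := fun y => Ring.mul_inverse_cancel _ (huY y)
  have hY2 : ∀ y, Ring.inverse (eY y) * eY y = 1 := fun y => Ring.inverse_mul_cancel _ (huY y)
  have hX1 : ∀ x, eX x * Ring.inverse (eX x) = 1 := fun x => Ring.mul_inverse_cancel _ (huX x)
  have hX2 : ∀ x, Ring.inverse (eX x) * eX x = 1 := fun x => Ring.inverse_mul_cancel _ (huX x)
  constructor
  · intro y x
    rw [Finset.sum_eq_single y (fun b _ hb => by simp [diagY, Ne.symm hb]) (by simp),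
      Finset.sum_eq_single x (fun b _ hb => by simp [diagX, hb]) (by simp)]
    simp only [diagY, diagX, merge, eq_self_iff_true, if_true]
    by_cases h : y = p x
    · subst h
      simp only [if_pos rfl, if_true]
      rw [mul_assoc (eY (p x) * t (p x)), hY2, mul_one, mul_assoc (eY (p x)),
        ← mul_assoc (Ring.inverse (eX x)), hX2, one_mul]
    · simp [h]
  · intro x y
    rw [Finset.sum_eq_single (p x) (fun b _ hb => by simp [split, Ne.symm hb]) (by simp),
      Finset.sum_eq_single x (fun b _ hb => by simp [diagX, Ne.symm hb]) (by simp)]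
    simp only [split, diagY, diagX, eq_self_iff_true, if_true]
    by_cases h : p x = y
    · subst h
      simp only [if_pos rfl, if_true]
      rw [hY1, one_mul, ← htX, mul_assoc (t (p x)), hX1, mul_one, htY]
    · simp [h]
end

section
/- In the splits-and-merges setup, assume that every value m(y) (y ∈ Y_λ, λ ∈ Λ) is invertible and central in R, and that 𝒯 ⊆ R is a G-stable subring containing m(y) and m(y)^{-1} for all y. Let B^𝒯 be the 𝕜-subalgebra of R_G(X×X) generated by all K_λ (λ ∈ Λ) together with all elements t_ω defined by t_ω(x,x') = δ_{x,x'}·e(x)·t(x), where t : X → R ranges over G-equivariant functions with values in 𝒯. Let A^𝒯 be the 𝕜-subalgebra of A := ⊕_{λ,μ∈Λ} R_G(Y_λ×Y_μ) (twisted convolution algebra) generated by B^𝒯 together with all S_λ and M_λ, and let C^𝒯 := A^𝒯 * 1_ω ⊆ ⊕_λ R_G(Y_λ×X), an (A^𝒯, B^𝒯)-bimodule under twisted convolution. Then the following Schur duality holds: every endomorphism of C^𝒯 as a left A^𝒯-module is given by right convolution with a unique element of B^𝒯, and every endomorphism of C^𝒯 as a right B^𝒯-module is given by left convolution with a unique element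 of A^𝒯. Moreover B^𝒯 = 1_ω * A^𝒯 * 1_ω. -/
/-!
Schur duality for sublattices of twisted convolution algebras
(double centralizer property for `A^𝒯`, `B^𝒯` acting on `C^𝒯`).
-/

open Finset

section Defs

variable (k : Type*) {G R : Type*} {Λ : Type*}
variable [Field k] [Group G] [Ring R] [Algebra k R]
  [MulSemiringAction G R] [SMulCommClass G k R]
variable [Fintype Λ] [DecidableEq Λ]
variable (Yf : Λ → Type*) [∀ l, Fintype (Yf l)] [∀ l, DecidableEq (Yf l)]
  [∀ l, MulAction G (Yf l)]

/-- The disjoint union `Y = ⨿_λ Y_λ`. -/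
abbrev YS := (l : Λ) × Yf l

/-- Twisted convolution of `R`-valued kernels on `Y × Y`, with twist `e`. -/
noncomputable def conv (e : YS Yf → R) (f g : YS Yf → YS Yf → R) :
    YS Yf → YS Yf → R :=
  fun a b => ∑ c, f a c * Ring.inverse (e c) * g c b

variable (ω : Λ) (p : ∀ l, Yf ω → Yf l) (e : YS Yf → R)

/-- The idempotent `1_λ`, supported on `Y_λ × Y_λ`: `1_λ(y,y') = δ_{y,y'} e(y)`. -/
noncomputable def oneEl (l : Λ) : YS Yf → YS Yf → R :=
  fun a b => if a = b ∧ a.1 = l then e a else 0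

/-- The split `S_λ(x,y) = δ_{p_λ(x),y}·e(y)`, supported on `X × Y_λ`. -/
noncomputable def Sel (l : Λ) : YS Yf → YS Yf → R :=
  fun a b =>
    if h : a.1 = ω ∧ b.1 = l then (if p l (h.1 ▸ a.2) = h.2 ▸ b.2 then e b else 0)
    else 0

/-- The merge `M_λ(y,x) = δ_{y,p_λ(x)}·e(y)`, supported on `Y_λ × X`. -/
noncomputable def Mel (l : Λ) : YS Yf → YS Yf → R :=
  fun a b =>
    if h : a.1 = l ∧ b.1 = ω then (if h.1 ▸ a.2 = p l (h.2 ▸ b.2) then e a else 0)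
    else 0

/-- `K_λ(x,x') = δ_{p_λ(x),p_λ(x')}·e(p_λ(x))`, supported on `X × X`. -/
noncomputable def Kel (l : Λ) : YS Yf → YS Yf → R :=
  fun a b =>
    if h : a.1 = ω ∧ b.1 = ω then
      (if p l (h.1 ▸ a.2) = p l (h.2 ▸ b.2) then e ⟨l, p l (h.1 ▸ a.2)⟩ else 0)
    else 0

/-- The diagonal element `t_ω(x,x') = δ_{x,x'}·e(x)·t(x)`, supported on `X × X`. -/
noncomputable def tEl (t : Yf ω → R) : YS Yf → YS Yf → R :=
  fun a b => if h : a = b ∧ a.1 = ω then e a * t (h.2 ▸ a.2) else 0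

/-- `m(y) = ∑_{x ∈ p_λ⁻¹(y)} e(x)⁻¹·e(y)` for `y ∈ Y_λ`. -/
noncomputable def mval (l : Λ) (y : Yf l) : R :=
  ∑ x : Yf ω, if p l x = y then Ring.inverse (e ⟨ω, x⟩) * e ⟨l, y⟩ else 0

end Defs


/-! ### Auxiliary convolution-algebra lemmas -/

set_option linter.unusedSectionVars false

section ConvBasic

variable {R : Type*} {Λ : Type*} [Ring R] [Fintype Λ] [DecidableEq Λ]
variable {Yf : Λ → Type*} [∀ l, Fintype (Yf l)] [∀ l, DecidableEq (Yf l)]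

theorem conv_assoc (e : YS Yf → R) (f g h : YS Yf → YS Yf → R) :
    conv Yf e (conv Yf e f g) h = conv Yf e f (conv Yf e g h) := by
  funext a b
  simp only [conv, Finset.sum_mul, Finset.mul_sum]
  rw [Finset.sum_comm]
  refine Finset.sum_congr rfl fun c _ => Finset.sum_congr rfl fun d _ => by noncomm_ring

theorem conv_add_left (e : YS Yf → R) (f g h : YS Yf → YS Yf → R) :
    conv Yf e (f + g) h = conv Yf e f h + conv Yf e g h := by
  funext a b
  simp [conv, add_mul, Finset.sum_add_distrib]

theorem conv_add_right (e : YS Yf → R) (f g h : YS Yf → YS Yf → R) :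
    conv Yf e f (g + h) = conv Yf e f g + conv Yf e f h := by
  funext a b
  simp [conv, mul_add, Finset.sum_add_distrib]

theorem conv_zero_left (e : YS Yf → R) (h : YS Yf → YS Yf → R) :
    conv Yf e 0 h = 0 := by
  funext a b; simp [conv]

theorem conv_zero_right (e : YS Yf → R) (h : YS Yf → YS Yf → R) :
    conv Yf e h 0 = 0 := by
  funext a b; simp [conv]

theorem conv_smul_left {k : Type*} [Field k] [Algebra k R]
    (e : YS Yf → R) (c : k) (f g : YS Yf → YS Yf → R) :
    conv Yf e (c • f) g = c • conv Yf e f g := by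
  funext a b
  simp [conv, Finset.smul_sum, smul_mul_assoc]

theorem conv_smul_right {k : Type*} [Field k] [Algebra k R]
    (e : YS Yf → R) (c : k) (f g : YS Yf → YS Yf → R) :
    conv Yf e f (c • g) = c • conv Yf e f g := by
  funext a b
  simp [conv, Finset.smul_sum, mul_smul_comm]

theorem conv_sum_left {ι : Type*} (e : YS Yf → R) (s : Finset ι)
    (f : ι → YS Yf → YS Yf → R) (g : YS Yf → YS Yf → R) :
    conv Yf e (∑ i ∈ s, f i) g = ∑ i ∈ s, conv Yf e (f i) g := by
  funext a b
  simp only [conv, Finset.sum_apply, Finset.sum_mul]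
  exact Finset.sum_comm

end ConvBasic


section ConvEval

variable {R : Type*} {Λ : Type*} [Ring R] [Fintype Λ] [DecidableEq Λ]
variable {Yf : Λ → Type*} [∀ l, Fintype (Yf l)] [∀ l, DecidableEq (Yf l)]
variable {ω : Λ} {p : ∀ l, Yf ω → Yf l} {e : YS Yf → R}

/-- General diagonal element on `Y_l` with extra weight `d`. -/
noncomputable def diagEl (e : YS Yf → R) (l : Λ) (d : Yf l → R) :
    YS Yf → YS Yf → R :=
  fun a b => if h : a = b ∧ a.1 = l then e a * d (h.2 ▸ a.2) else 0

theorem tEl_eq_diagEl (t : Yf ω → R) : tEl Yf ω e t = diagEl e ω t := rfl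

theorem oneEl_eq_diagEl (l : Λ) : oneEl Yf e l = diagEl e l (fun _ => 1) := by
  funext a b
  rw [oneEl, diagEl]
  split_ifs with h
  · rw [mul_one]
  · rfl

theorem conv_oneEl (heu : ∀ a, IsUnit (e a)) (f : YS Yf → YS Yf → R) (l : Λ) :
    conv Yf e f (oneEl Yf e l) = fun a b => if b.1 = l then f a b else 0 := by
  funext a b
  rw [conv, Finset.sum_eq_single b]
  · by_cases hb : b.1 = l
    · rw [oneEl, if_pos ⟨rfl, hb⟩, if_pos hb, mul_assoc,
        Ring.inverse_mul_cancel _ (heu b), mul_one]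
    · rw [oneEl, if_neg (fun hc => hb hc.2), if_neg hb, mul_zero]
  · intro c _ hc
    rw [oneEl, if_neg (fun hh => hc hh.1), mul_zero]
  · intro h; exact absurd (Finset.mem_univ b) h

theorem oneEl_conv (heu : ∀ a, IsUnit (e a)) (l : Λ) (f : YS Yf → YS Yf → R) :
    conv Yf e (oneEl Yf e l) f = fun a b => if a.1 = l then f a b else 0 := by
  funext a b
  rw [conv, Finset.sum_eq_single a]
  · by_cases ha : a.1 = l
    · rw [oneEl, if_pos ⟨rfl, ha⟩, if_pos ha, Ring.mul_inverse_cancel _ (heu a), one_mul]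
    · rw [oneEl, if_neg (fun hc => ha hc.2), if_neg ha, zero_mul, zero_mul]
  · intro c _ hc
    rw [oneEl, if_neg (fun hh => hc hh.1.symm), zero_mul, zero_mul]
  · intro h; exact absurd (Finset.mem_univ a) h

theorem conv_diagEl (heu : ∀ a, IsUnit (e a)) (f : YS Yf → YS Yf → R)
    (l : Λ) (d : Yf l → R) :
    conv Yf e f (diagEl e l d) =
      fun a b => if h : b.1 = l then f a b * d (h ▸ b.2) else 0 := by
  funext a b
  rw [conv, Finset.sum_eq_single b]
  · by_cases hb : b.1 = l
    · rw [diagEl, dif_pos (⟨rfl, hb⟩ : b = b ∧ b.1 = l), dif_pos hb,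
        mul_assoc, ← mul_assoc (Ring.inverse (e b)),
        Ring.inverse_mul_cancel _ (heu b), one_mul]
    · rw [diagEl, dif_neg (fun hc => hb hc.2), dif_neg hb, mul_zero]
  · intro c _ hc
    rw [diagEl, dif_neg (fun hh => hc hh.1), mul_zero]
  · intro h; exact absurd (Finset.mem_univ b) h

theorem diagEl_conv_central (heu : ∀ a, IsUnit (e a)) (l : Λ) (d : Yf l → R)
    (hd : ∀ y r, d y * r = r * d y) (f : YS Yf → YS Yf → R) :
    conv Yf e (diagEl e l d) f =
      fun a b => if h : a.1 = l then d (h ▸ a.2) * f a b else 0 := by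
  funext a b
  rw [conv, Finset.sum_eq_single a]
  · by_cases ha : a.1 = l
    · rw [diagEl, dif_pos (⟨rfl, ha⟩ : a = a ∧ a.1 = l), dif_pos ha,
        mul_assoc (e a), hd, ← mul_assoc,
        Ring.mul_inverse_cancel _ (heu a), one_mul]
    · rw [diagEl, dif_neg (fun hc => ha hc.2), dif_neg ha, zero_mul, zero_mul]
  · intro c _ hc
    rw [diagEl, dif_neg (fun hh => hc hh.1.symm), zero_mul, zero_mul]
  · intro h; exact absurd (Finset.mem_univ a) h

theorem diag_conv_diag (heu : ∀ a, IsUnit (e a)) (l : Λ) (d d' : Yf l → R) :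
    conv Yf e (diagEl e l d) (diagEl e l d') =
      diagEl e l (fun y => d y * d' y) := by
  rw [conv_diagEl heu]
  funext a b
  by_cases hb : b.1 = l
  · rw [dif_pos hb, diagEl, diagEl]
    by_cases hab : a = b ∧ a.1 = l
    · rw [dif_pos hab, dif_pos hab]
      obtain ⟨hab1, habl⟩ := hab
      subst hab1
      rw [mul_assoc]
    · rw [dif_neg hab, dif_neg hab, zero_mul]
  · rw [dif_neg hb, diagEl, dif_neg (show ¬(a = b ∧ a.1 = l) by rintro ⟨rfl, h⟩; exact hb h)]

end ConvEval


section Supports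

variable {R : Type*} {Λ : Type*} [Ring R] [Fintype Λ] [DecidableEq Λ]
variable {Yf : Λ → Type*} [∀ l, Fintype (Yf l)] [∀ l, DecidableEq (Yf l)]
variable {ω : Λ} {p : ∀ l, Yf ω → Yf l} {e : YS Yf → R}

/-- `f` is supported on rows in `Y_l`. -/
def LSupp (l : Λ) (f : YS Yf → YS Yf → R) : Prop := ∀ a b, f a b ≠ 0 → a.1 = l

/-- `f` is supported on columns in `Y_l`. -/
def RSupp (l : Λ) (f : YS Yf → YS Yf → R) : Prop := ∀ a b, f a b ≠ 0 → b.1 = l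

theorem lsupp_Sel (l : Λ) : LSupp ω (Sel Yf ω p e l) :=
  fun _ _ h => by by_contra hn; exact h (dif_neg (fun hc => hn hc.1))

theorem rsupp_Sel (l : Λ) : RSupp l (Sel Yf ω p e l) :=
  fun _ _ h => by by_contra hn; exact h (dif_neg (fun hc => hn hc.2))

theorem lsupp_Mel (l : Λ) : LSupp l (Mel Yf ω p e l) :=
  fun _ _ h => by by_contra hn; exact h (dif_neg (fun hc => hn hc.1))

theorem rsupp_Mel (l : Λ) : RSupp ω (Mel Yf ω p e l) :=
  fun _ _ h => by by_contra hn; exact h (dif_neg (fun hc => hn hc.2))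

theorem lsupp_Kel (l : Λ) : LSupp ω (Kel Yf ω p e l) :=
  fun _ _ h => by by_contra hn; exact h (dif_neg (fun hc => hn hc.1))

theorem rsupp_Kel (l : Λ) : RSupp ω (Kel Yf ω p e l) :=
  fun _ _ h => by by_contra hn; exact h (dif_neg (fun hc => hn hc.2))

theorem lsupp_diagEl (l : Λ) (d : Yf l → R) : LSupp l (diagEl e l d) :=
  fun _ _ h => by by_contra hn; exact h (dif_neg (fun hc => hn hc.2))

theorem rsupp_diagEl (l : Λ) (d : Yf l → R) : RSupp l (diagEl e l d) :=
  fun a b h => by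
    by_contra hn
    exact h (dif_neg (by rintro ⟨rfl, h2⟩; exact hn h2))

theorem lsupp_oneEl (l : Λ) : LSupp l (oneEl Yf e l) :=
  fun _ _ h => by by_contra hn; exact h (if_neg (fun hc => hn hc.2))

theorem rsupp_oneEl (l : Λ) : RSupp l (oneEl Yf e l) :=
  fun a b h => by
    by_contra hn
    exact h (if_neg (by rintro ⟨rfl, h2⟩; exact hn h2))

theorem lsupp_conv (l : Λ) {f : YS Yf → YS Yf → R} (hf : LSupp l f)
    (g : YS Yf → YS Yf → R) : LSupp l (conv Yf e f g) := by
  intro a b h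
  obtain ⟨c, _, hc⟩ := Finset.exists_ne_zero_of_sum_ne_zero h
  refine hf a c fun h0 => hc ?_
  rw [h0, zero_mul, zero_mul]

theorem rsupp_conv (l : Λ) (f : YS Yf → YS Yf → R) {g : YS Yf → YS Yf → R}
    (hg : RSupp l g) : RSupp l (conv Yf e f g) := by
  intro a b h
  obtain ⟨c, _, hc⟩ := Finset.exists_ne_zero_of_sum_ne_zero h
  refine hg c b fun h0 => hc ?_
  rw [h0, mul_zero]

theorem lsupp_add (l : Λ) {f g : YS Yf → YS Yf → R} (hf : LSupp l f)
    (hg : LSupp l g) : LSupp l (f + g) := by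
  intro a b h
  by_contra hn
  apply h
  have h1 : f a b = 0 := by by_contra h1; exact hn (hf a b h1)
  have h2 : g a b = 0 := by by_contra h2; exact hn (hg a b h2)
  simp [h1, h2]

theorem rsupp_add (l : Λ) {f g : YS Yf → YS Yf → R} (hf : RSupp l f)
    (hg : RSupp l g) : RSupp l (f + g) := by
  intro a b h
  by_contra hn
  apply h
  have h1 : f a b = 0 := by by_contra h1; exact hn (hf a b h1)
  have h2 : g a b = 0 := by by_contra h2; exact hn (hg a b h2)
  simp [h1, h2]

theorem lsupp_smul {k : Type*} [Field k] [Algebra k R] (l : Λ) (c : k)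
    {f : YS Yf → YS Yf → R} (hf : LSupp l f) : LSupp l (c • f) := by
  intro a b h
  refine hf a b fun h0 => h ?_
  simp [h0]

theorem rsupp_smul {k : Type*} [Field k] [Algebra k R] (l : Λ) (c : k)
    {f : YS Yf → YS Yf → R} (hf : RSupp l f) : RSupp l (c • f) := by
  intro a b h
  refine hf a b fun h0 => h ?_
  simp [h0]

theorem oneEl_conv_of_lsupp (heu : ∀ a, IsUnit (e a)) {l : Λ}
    {f : YS Yf → YS Yf → R} (h : LSupp l f) :
    conv Yf e (oneEl Yf e l) f = f := by
  rw [oneEl_conv heu]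
  funext a b
  by_cases ha : a.1 = l
  · rw [if_pos ha]
  · rw [if_neg ha]
    by_contra h0
    exact ha (h a b fun h1 => h0 h1.symm)

theorem oneEl_conv_of_lsupp_ne (heu : ∀ a, IsUnit (e a)) {l l' : Λ}
    {f : YS Yf → YS Yf → R} (h : LSupp l' f) (hne : l' ≠ l) :
    conv Yf e (oneEl Yf e l) f = 0 := by
  rw [oneEl_conv heu]
  funext a b
  by_cases ha : a.1 = l
  · rw [if_pos ha]
    by_contra h0
    exact hne ((h a b h0) ▸ ha)
  · rw [if_neg ha]; rfl

theorem conv_oneEl_of_rsupp (heu : ∀ a, IsUnit (e a)) {l : Λ}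
    {f : YS Yf → YS Yf → R} (h : RSupp l f) :
    conv Yf e f (oneEl Yf e l) = f := by
  rw [conv_oneEl heu]
  funext a b
  by_cases hb : b.1 = l
  · rw [if_pos hb]
  · rw [if_neg hb]
    by_contra h0
    exact hb (h a b fun h1 => h0 h1.symm)

theorem conv_oneEl_of_rsupp_ne (heu : ∀ a, IsUnit (e a)) {l l' : Λ}
    {f : YS Yf → YS Yf → R} (h : RSupp l' f) (hne : l' ≠ l) :
    conv Yf e f (oneEl Yf e l) = 0 := by
  rw [conv_oneEl heu]
  funext a b
  by_cases hb : b.1 = l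
  · rw [if_pos hb]
    by_contra h0
    exact hne ((h a b h0) ▸ hb)
  · rw [if_neg hb]; rfl

theorem oneEl_conv_oneEl (heu : ∀ a, IsUnit (e a)) (l : Λ) :
    conv Yf e (oneEl Yf e l) (oneEl Yf e l) = oneEl Yf e l :=
  oneEl_conv_of_lsupp heu (lsupp_oneEl l)

end Supports


section Structural

variable {R : Type*} {Λ : Type*} [Ring R] [Fintype Λ] [DecidableEq Λ]
variable {Yf : Λ → Type*} [∀ l, Fintype (Yf l)] [∀ l, DecidableEq (Yf l)]
variable {ω : Λ} {p : ∀ l, Yf ω → Yf l} {e : YS Yf → R}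

theorem Sel_apply (l : Λ) (x : Yf ω) (c : YS Yf) :
    Sel Yf ω p e l ⟨ω, x⟩ c = if c = ⟨l, p l x⟩ then e c else 0 := by
  obtain ⟨lc, xc⟩ := c
  by_cases hlc : lc = l
  · subst hlc
    rw [Sel, dif_pos (⟨rfl, rfl⟩ : (⟨ω, x⟩ : YS Yf).1 = ω ∧ (⟨lc, xc⟩ : YS Yf).1 = lc)]
    by_cases hx : p lc x = xc
    · rw [if_pos hx, if_pos (by rw [hx])]
    · rw [if_neg hx, if_neg (fun hc => hx (eq_of_heq (Sigma.mk.inj_iff.mp hc).2).symm)]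
  · rw [Sel, dif_neg (fun hc => hlc hc.2),
      if_neg (fun hc => hlc (congrArg Sigma.fst hc))]

theorem Mel_apply (l : Λ) (x : Yf ω) (c : YS Yf) :
    Mel Yf ω p e l c ⟨ω, x⟩ = if c = ⟨l, p l x⟩ then e c else 0 := by
  obtain ⟨lc, xc⟩ := c
  by_cases hlc : lc = l
  · subst hlc
    rw [Mel, dif_pos (⟨rfl, rfl⟩ : (⟨lc, xc⟩ : YS Yf).1 = lc ∧ (⟨ω, x⟩ : YS Yf).1 = ω)]
    by_cases hx : xc = p lc x
    · rw [if_pos hx, if_pos (by rw [hx])]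
    · rw [if_neg hx, if_neg (fun hc => hx (eq_of_heq (Sigma.mk.inj_iff.mp hc).2))]
  · rw [Mel, dif_neg (fun hc => hlc hc.1),
      if_neg (fun hc => hlc (congrArg Sigma.fst hc))]

theorem Kel_apply (l : Λ) (x x' : Yf ω) :
    Kel Yf ω p e l ⟨ω, x⟩ ⟨ω, x'⟩ =
      if p l x = p l x' then e ⟨l, p l x⟩ else 0 :=
  dif_pos ⟨rfl, rfl⟩

theorem Sel_zero_row {l : Λ} {a b : YS Yf} (h : a.1 ≠ ω) :
    Sel Yf ω p e l a b = 0 := dif_neg fun hc => h hc.1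

theorem Sel_zero_col {l : Λ} {a b : YS Yf} (h : b.1 ≠ l) :
    Sel Yf ω p e l a b = 0 := dif_neg fun hc => h hc.2

theorem Mel_zero_row {l : Λ} {a b : YS Yf} (h : a.1 ≠ l) :
    Mel Yf ω p e l a b = 0 := dif_neg fun hc => h hc.1

theorem Mel_zero_col {l : Λ} {a b : YS Yf} (h : b.1 ≠ ω) :
    Mel Yf ω p e l a b = 0 := dif_neg fun hc => h hc.2

theorem Kel_zero_row {l : Λ} {a b : YS Yf} (h : a.1 ≠ ω) :
    Kel Yf ω p e l a b = 0 := dif_neg fun hc => h hc.1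

theorem Kel_zero_col {l : Λ} {a b : YS Yf} (h : b.1 ≠ ω) :
    Kel Yf ω p e l a b = 0 := dif_neg fun hc => h hc.2

theorem Mel_omega (hpid : ∀ x, p ω x = x) :
    Mel Yf ω p e ω = oneEl Yf e ω := by
  funext a b
  obtain ⟨lb, xb⟩ := b
  by_cases hb : lb = ω
  · subst hb
    rw [Mel_apply, hpid, oneEl]
    by_cases hab : a = (⟨lb, xb⟩ : YS Yf)
    · rw [if_pos hab, if_pos ⟨hab, by rw [hab]⟩]
    · rw [if_neg hab, if_neg (fun hc => hab hc.1)]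
  · rw [Mel_zero_col hb, oneEl,
      if_neg (by rintro ⟨rfl, h2⟩; exact hb h2)]

theorem Sel_omega (hpid : ∀ x, p ω x = x) :
    Sel Yf ω p e ω = oneEl Yf e ω := by
  funext a b
  obtain ⟨la, xa⟩ := a
  by_cases ha : la = ω
  · subst ha
    rw [Sel_apply, hpid, oneEl]
    by_cases hab : b = (⟨la, xa⟩ : YS Yf)
    · rw [if_pos hab, if_pos ⟨hab.symm, rfl⟩, hab]
    · rw [if_neg hab, if_neg (fun hc => hab hc.1.symm)]
  · rw [Sel_zero_row ha, oneEl, if_neg (fun hc => ha hc.2)]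

theorem Kel_omega (hpid : ∀ x, p ω x = x) :
    Kel Yf ω p e ω = oneEl Yf e ω := by
  funext a b
  obtain ⟨la, xa⟩ := a; obtain ⟨lb, xb⟩ := b
  by_cases ha : la = ω
  · by_cases hb : lb = ω
    · subst ha; subst hb
      rw [Kel_apply, hpid, hpid, oneEl]
      by_cases hab : xa = xb
      · subst hab
        rw [if_pos rfl, if_pos ⟨rfl, rfl⟩]
      · rw [if_neg hab,
          if_neg (by rintro ⟨h1, -⟩; exact hab (eq_of_heq (Sigma.mk.inj_iff.mp h1).2))]
    · rw [Kel_zero_col hb, oneEl,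
        if_neg (by
          rintro ⟨h1, h2⟩
          have := congrArg Sigma.fst h1
          simp only at this h2
          exact hb (this ▸ h2))]
  · rw [Kel_zero_row ha, oneEl, if_neg (fun hc => ha hc.2)]

theorem Sel_conv_Mel (heu : ∀ a, IsUnit (e a)) (l l' : Λ) :
    conv Yf e (Sel Yf ω p e l) (Mel Yf ω p e l') =
      if l = l' then Kel Yf ω p e l else 0 := by
  by_cases hll : l = l'
  · subst hll
    rw [if_pos rfl]
    funext a b
    obtain ⟨la, xa⟩ := a; obtain ⟨lb, xb⟩ := b
    by_cases ha : la = ω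
    · by_cases hb : lb = ω
      · subst ha; subst hb
        rw [conv, Kel_apply, Finset.sum_eq_single (⟨l, p l xa⟩ : YS Yf)]
        · rw [Sel_apply, if_pos rfl, Mel_apply]
          by_cases hpp : p l xa = p l xb
          · rw [if_pos (by rw [hpp]), if_pos hpp, mul_assoc,
              Ring.inverse_mul_cancel _ (heu _), mul_one]
          · rw [if_neg (fun hc => hpp (eq_of_heq (Sigma.mk.inj_iff.mp hc).2)),
              if_neg hpp, mul_zero]
        · intro c _ hc
          rw [Sel_apply, if_neg hc, zero_mul, zero_mul]
        · intro h; exact absurd (Finset.mem_univ _) h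
      · rw [conv, Finset.sum_eq_zero
            (fun c _ => by rw [Mel_zero_col hb, mul_zero]), Kel_zero_col hb]
    · rw [conv, Finset.sum_eq_zero
          (fun c _ => by rw [Sel_zero_row ha, zero_mul, zero_mul]), Kel_zero_row ha]
  · rw [if_neg hll]
    funext a b
    rw [conv, Finset.sum_eq_zero]
    · rfl
    · intro c _
      by_cases hc1 : c.1 = l
      · rw [Mel_zero_row (fun h' => hll (hc1 ▸ h')), mul_zero]
      · rw [Sel_zero_col hc1, zero_mul, zero_mul]

end Structural


section Structural2

variable {R : Type*} {Λ : Type*} [Ring R] [Fintype Λ] [DecidableEq Λ]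
variable {Yf : Λ → Type*} [∀ l, Fintype (Yf l)] [∀ l, DecidableEq (Yf l)]
variable {ω : Λ} {p : ∀ l, Yf ω → Yf l} {e : YS Yf → R}

theorem central_ringInverse {m : R} (hm : IsUnit m) (hc : ∀ r, m * r = r * m)
    (r : R) : Ring.inverse m * r = r * Ring.inverse m := by
  have h1 := Ring.inverse_mul_cancel _ hm
  have h2 := Ring.mul_inverse_cancel _ hm
  calc Ring.inverse m * r
      = Ring.inverse m * r * (m * Ring.inverse m) := by rw [h2, mul_one]
    _ = Ring.inverse m * (r * m) * Ring.inverse m := by simp only [mul_assoc]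
    _ = Ring.inverse m * (m * r) * Ring.inverse m := by rw [← hc r]
    _ = r * Ring.inverse m := by rw [← mul_assoc, h1, one_mul]

/-- `M_λ` with an extra weight `d(y)`. -/
noncomputable def MelW (ω : Λ) (p : ∀ l, Yf ω → Yf l) (e : YS Yf → R)
    (l : Λ) (d : Yf l → R) : YS Yf → YS Yf → R :=
  fun a b =>
    if h : b.1 = ω then
      (if a = ⟨l, p l (h ▸ b.2)⟩ then e a * d (p l (h ▸ b.2)) else 0)
    else 0

theorem MelW_apply (l : Λ) (d : Yf l → R) (a : YS Yf) (x : Yf ω) :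
    MelW ω p e l d a ⟨ω, x⟩ =
      if a = ⟨l, p l x⟩ then e a * d (p l x) else 0 :=
  dif_pos rfl

theorem MelW_zero_col {l : Λ} {d : Yf l → R} {a b : YS Yf} (h : b.1 ≠ ω) :
    MelW ω p e l d a b = 0 := dif_neg h

theorem Mel_eq_MelW_one (l : Λ) :
    Mel Yf ω p e l = MelW ω p e l (fun _ => (1 : R)) := by
  funext a b
  obtain ⟨lb, xb⟩ := b
  by_cases hb : lb = ω
  · subst hb
    rw [Mel_apply, MelW_apply]
    split_ifs with h
    · rw [mul_one]
    · rfl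
  · rw [Mel_zero_col hb, MelW_zero_col hb]

theorem Mel_conv_Sel (heu : ∀ a, IsUnit (e a)) (l : Λ) :
    conv Yf e (Mel Yf ω p e l) (Sel Yf ω p e l) =
      diagEl e l (fun y => mval Yf ω p e l y) := by
  funext a b
  obtain ⟨lb, yb⟩ := b
  by_cases hb : lb = l
  · subst hb
    by_cases hab : a = (⟨lb, yb⟩ : YS Yf)
    · subst hab
      rw [diagEl, dif_pos (⟨rfl, rfl⟩ : (⟨lb, yb⟩ : YS Yf) = ⟨lb, yb⟩ ∧ lb = lb)]
      rw [conv, ← Finset.univ_sigma_univ, Finset.sum_sigma]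
      rw [Finset.sum_eq_single ω]
      · rw [mval, Finset.mul_sum]
        refine Finset.sum_congr rfl fun x _ => ?_
        rw [Mel_apply, Sel_apply]
        by_cases hx : p lb x = yb
        · rw [if_pos (by rw [hx]), if_pos (by rw [hx]), mul_assoc]
        · rw [if_neg (fun hc => hx (eq_of_heq (Sigma.mk.inj_iff.mp hc).2).symm),
            if_neg hx, zero_mul, zero_mul, mul_zero]
      · intro lc _ hlc
        exact Finset.sum_eq_zero fun x _ => by
          rw [Mel_zero_col (show (⟨lc, x⟩ : YS Yf).1 ≠ ω from hlc), zero_mul, zero_mul]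
      · intro h; exact absurd (Finset.mem_univ _) h
    · rw [diagEl, dif_neg (fun hc => hab hc.1)]
      rw [conv, Finset.sum_eq_zero]
      intro c _
      obtain ⟨lc, xc⟩ := c
      by_cases hlc : lc = ω
      · subst hlc
        rw [Mel_apply, Sel_apply]
        by_cases h1 : a = (⟨lb, p lb xc⟩ : YS Yf)
        · rw [if_neg (show ¬(⟨lb, yb⟩ : YS Yf) = ⟨lb, p lb xc⟩ from
              fun h2 => hab (h1.trans h2.symm)), mul_zero]
        · rw [if_neg h1, zero_mul, zero_mul]
      · rw [Mel_zero_col (show (⟨lc, xc⟩ : YS Yf).1 ≠ ω from hlc), zero_mul, zero_mul]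
  · rw [diagEl, dif_neg (by
      rintro ⟨h1, h2⟩
      have := congrArg Sigma.fst h1
      simp only at this h2
      exact hb (this ▸ h2))]
    rw [conv, Finset.sum_eq_zero]
    intro c _
    rw [Sel_zero_col hb, mul_zero]

theorem Mel_conv_Kel (heu : ∀ a, IsUnit (e a)) (l : Λ) :
    conv Yf e (Mel Yf ω p e l) (Kel Yf ω p e l) =
      MelW ω p e l (fun y => mval Yf ω p e l y) := by
  funext a b
  obtain ⟨lb, xb⟩ := b
  by_cases hb : lb = ω
  · subst hb
    rw [MelW_apply]
    rw [conv, ← Finset.univ_sigma_univ, Finset.sum_sigma]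
    rw [Finset.sum_eq_single lb]
    · by_cases hab : a = (⟨l, p l xb⟩ : YS Yf)
      · rw [if_pos hab, mval, Finset.mul_sum]
        refine Finset.sum_congr rfl fun x _ => ?_
        rw [Mel_apply, Kel_apply]
        by_cases hx : p l x = p l xb
        · rw [if_pos (show a = (⟨l, p l x⟩ : YS Yf) by rw [hab, hx]),
            if_pos hx, if_pos hx, hx, mul_assoc]
        · rw [if_neg (show ¬a = (⟨l, p l x⟩ : YS Yf) from fun hc =>
              hx (eq_of_heq (Sigma.mk.inj_iff.mp (hc.symm.trans hab)).2)),
            zero_mul, zero_mul, if_neg hx, mul_zero]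
      · rw [if_neg hab]
        refine Finset.sum_eq_zero fun x _ => ?_
        rw [Mel_apply, Kel_apply]
        by_cases h1 : a = (⟨l, p l x⟩ : YS Yf)
        · rw [if_neg (show ¬p l x = p l xb from fun hpp => hab (by rw [h1, hpp])),
            mul_zero]
        · rw [if_neg h1, zero_mul, zero_mul]
    · intro lc _ hlc
      exact Finset.sum_eq_zero fun x _ => by
        rw [Mel_zero_col (show (⟨lc, x⟩ : YS Yf).1 ≠ lb from hlc), zero_mul, zero_mul]
    · intro h; exact absurd (Finset.mem_univ _) h
  · rw [MelW_zero_col hb, conv, Finset.sum_eq_zero]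
    intro c _
    rw [Kel_zero_col hb, mul_zero]

theorem MelW_conv_tEl (heu : ∀ a, IsUnit (e a)) (l : Λ) (d t' : Yf l → R) :
    conv Yf e (MelW ω p e l d) (tEl Yf ω e (fun x => t' (p l x))) =
      MelW ω p e l (fun y => d y * t' y) := by
  rw [tEl_eq_diagEl, conv_diagEl heu]
  funext a b
  obtain ⟨lb, xb⟩ := b
  by_cases hb : lb = ω
  · subst hb
    rw [dif_pos rfl, MelW_apply, MelW_apply, ite_mul, zero_mul, mul_assoc]
  · rw [dif_neg hb, MelW_zero_col hb]

theorem sum_conv_oneEl (heu : ∀ a, IsUnit (e a)) (f : YS Yf → YS Yf → R) :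
    ∑ l, conv Yf e f (oneEl Yf e l) = f := by
  funext a b
  rw [Finset.sum_apply, Finset.sum_apply]
  simp only [conv_oneEl heu]
  rw [Finset.sum_ite_eq]
  exact if_pos (Finset.mem_univ _)

end Structural2


section MvalLemmas

variable {R : Type*} {Λ : Type*} [Ring R] [Fintype Λ] [DecidableEq Λ]
variable {Yf : Λ → Type*} [∀ l, Fintype (Yf l)] [∀ l, DecidableEq (Yf l)]
variable {ω : Λ} {p : ∀ l, Yf ω → Yf l} {e : YS Yf → R}

/-- `M_λ * K_λ * (m∘p_λ)⁻¹_ω = M_λ`. -/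
theorem Mel_absorb (heu : ∀ a, IsUnit (e a))
    (hm_unit : ∀ (l : Λ) (y : Yf l), IsUnit (mval Yf ω p e l y)) (l : Λ) :
    conv Yf e (Mel Yf ω p e l)
      (conv Yf e (Kel Yf ω p e l)
        (tEl Yf ω e (fun x => Ring.inverse (mval Yf ω p e l (p l x))))) =
      Mel Yf ω p e l := by
  rw [← conv_assoc, Mel_conv_Kel heu,
    MelW_conv_tEl heu l _ (fun y => Ring.inverse (mval Yf ω p e l y))]
  have h : (fun y => mval Yf ω p e l y * Ring.inverse (mval Yf ω p e l y)) =
      fun _ : Yf l => (1 : R) :=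
    funext fun y => Ring.mul_inverse_cancel _ (hm_unit l y)
  rw [h, ← Mel_eq_MelW_one]

/-- `(m∘p_λ)⁻¹_ω` commutes with `K_λ`. -/
theorem tml_comm (heu : ∀ a, IsUnit (e a))
    (hm_unit : ∀ (l : Λ) (y : Yf l), IsUnit (mval Yf ω p e l y))
    (hm_central : ∀ (l : Λ) (y : Yf l) (r : R),
        mval Yf ω p e l y * r = r * mval Yf ω p e l y) (l : Λ) :
    conv Yf e (tEl Yf ω e (fun x => Ring.inverse (mval Yf ω p e l (p l x))))
      (Kel Yf ω p e l) =
    conv Yf e (Kel Yf ω p e l)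
      (tEl Yf ω e (fun x => Ring.inverse (mval Yf ω p e l (p l x)))) := by
  rw [tEl_eq_diagEl, conv_diagEl heu,
    diagEl_conv_central heu ω _
      (fun x r => central_ringInverse (hm_unit l (p l x)) (hm_central l (p l x)) r)]
  funext a b
  obtain ⟨la, xa⟩ := a; obtain ⟨lb, xb⟩ := b
  by_cases ha : la = ω
  · by_cases hb' : lb = ω
    · subst ha; subst hb'
      rw [dif_pos rfl, dif_pos rfl, Kel_apply]
      by_cases hpp : p l xa = p l xb
      · rw [if_pos hpp, hpp,
          central_ringInverse (hm_unit l (p l xb)) (hm_central l (p l xb))]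
      · rw [if_neg hpp, mul_zero, zero_mul]
    · rw [dif_neg hb']
      split
      all_goals first
        | rfl
        | rw [Kel_zero_col (show (⟨lb, xb⟩ : YS Yf).1 ≠ ω from hb'), mul_zero]
  · rw [dif_neg ha]
    symm
    split
    all_goals first
      | rfl
      | rw [Kel_zero_row (show (⟨la, xa⟩ : YS Yf).1 ≠ ω from ha), zero_mul]

/-- `1_λ = M_λ * (S_λ * (e·m⁻¹)_λ)`. -/
theorem oneEl_eq_MSD (heu : ∀ a, IsUnit (e a))
    (hm_unit : ∀ (l : Λ) (y : Yf l), IsUnit (mval Yf ω p e l y)) (l : Λ) :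
    oneEl Yf e l =
      conv Yf e (Mel Yf ω p e l)
        (conv Yf e (Sel Yf ω p e l)
          (diagEl e l (fun y => Ring.inverse (mval Yf ω p e l y)))) := by
  rw [← conv_assoc, Mel_conv_Sel heu, diag_conv_diag heu]
  have h : (fun y => mval Yf ω p e l y * Ring.inverse (mval Yf ω p e l y)) =
      fun _ : Yf l => (1 : R) :=
    funext fun y => Ring.mul_inverse_cancel _ (hm_unit l y)
  rw [h, ← oneEl_eq_diagEl]

end MvalLemmas


section Equivariance

variable {G R : Type*} {Λ : Type*} [Group G] [Ring R] [MulSemiringAction G R]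
variable [Fintype Λ] [DecidableEq Λ]
variable {Yf : Λ → Type*} [∀ l, Fintype (Yf l)] [∀ l, DecidableEq (Yf l)]
variable [∀ l, MulAction G (Yf l)]
variable {ω : Λ} {p : ∀ l, Yf ω → Yf l} {e : YS Yf → R}

theorem smul_ringInverse_s5 (g : G) {r : R} (hr : IsUnit r) :
    g • Ring.inverse r = Ring.inverse (g • r) := by
  have h1 : (g • Ring.inverse r) * (g • r) = 1 := by
    rw [← smul_mul', Ring.inverse_mul_cancel _ hr, smul_one]
  have h2 : (g • r) * (g • Ring.inverse r) = 1 := by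
    rw [← smul_mul', Ring.mul_inverse_cancel _ hr, smul_one]
  let u : Rˣ := ⟨g • r, g • Ring.inverse r, h2, h1⟩
  calc g • Ring.inverse r = ↑u⁻¹ := rfl
    _ = Ring.inverse (u : R) := (Ring.inverse_unit u).symm
    _ = Ring.inverse (g • r) := rfl

theorem mval_smul
    (hpequiv : ∀ (l : Λ) (g : G) (x : Yf ω), p l (g • x) = g • p l x)
    (hee : ∀ (g : G) (l : Λ) (y : Yf l), e ⟨l, g • y⟩ = g • e ⟨l, y⟩)
    (heu : ∀ a, IsUnit (e a))
    (g : G) (l : Λ) (y : Yf l) :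
    mval Yf ω p e l (g • y) = g • mval Yf ω p e l y := by
  rw [mval, mval, Finset.smul_sum]
  refine Fintype.sum_bijective (fun x => g⁻¹ • x) (MulAction.bijective g⁻¹) _ _
    fun x => ?_
  by_cases hx : p l x = g • y
  · rw [if_pos hx, if_pos (show p l (g⁻¹ • x) = y by
      rw [hpequiv, hx, inv_smul_smul])]
    rw [smul_mul', ← hee g l y, smul_ringInverse_s5 g (heu _), ← hee g ω (g⁻¹ • x),
      smul_inv_smul]
  · rw [if_neg hx, if_neg (show ¬p l (g⁻¹ • x) = y from fun hc => hx (by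
      rw [← smul_inv_smul g x, hpequiv, hc])), smul_zero]

end Equivariance

/-- The 𝕜-subalgebra `B^𝒯` of the twisted convolution algebra `R_G(X×X)`,
generated by the `K_λ` and the diagonal elements `t_ω` for `G`-equivariant
`𝒯`-valued functions `t` on `X`.  (Membership predicate.) -/
inductive InB (k G : Type*) {R : Type*} {Λ : Type*} [Field k] [Group G] [Ring R]
    [Algebra k R] [MulSemiringAction G R] [SMulCommClass G k R]
    [Fintype Λ] [DecidableEq Λ]
    (Yf : Λ → Type*) [∀ l, Fintype (Yf l)] [∀ l, DecidableEq (Yf l)]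
    [∀ l, MulAction G (Yf l)]
    (ω : Λ) (p : ∀ l, Yf ω → Yf l) (e : YS Yf → R) (T : Subring R) :
    (YS Yf → YS Yf → R) → Prop
  | K (l : Λ) : InB k G Yf ω p e T (Kel Yf ω p e l)
  | t (t : Yf ω → R) (ht : ∀ (g : G) (y : Yf ω), t (g • y) = g • t y)
      (hT : ∀ y, t y ∈ T) : InB k G Yf ω p e T (tEl Yf ω e t)
  | add {f g} : InB k G Yf ω p e T f → InB k G Yf ω p e T g → InB k G Yf ω p e T (f + g)
  | smul (c : k) {f} : InB k G Yf ω p e T f → InB k G Yf ω p e T (c • f)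
  | mul {f g} : InB k G Yf ω p e T f → InB k G Yf ω p e T g →
      InB k G Yf ω p e T (conv Yf e f g)

/-- The 𝕜-subalgebra `A^𝒯` of the twisted convolution algebra
`⊕_{λ,μ} R_G(Y_λ×Y_μ)`, generated by `B^𝒯` and all splits and merges.
(Membership predicate.) -/
inductive InA (k G : Type*) {R : Type*} {Λ : Type*} [Field k] [Group G] [Ring R]
    [Algebra k R] [MulSemiringAction G R] [SMulCommClass G k R]
    [Fintype Λ] [DecidableEq Λ]
    (Yf : Λ → Type*) [∀ l, Fintype (Yf l)] [∀ l, DecidableEq (Yf l)]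
    [∀ l, MulAction G (Yf l)]
    (ω : Λ) (p : ∀ l, Yf ω → Yf l) (e : YS Yf → R) (T : Subring R) :
    (YS Yf → YS Yf → R) → Prop
  | ofB {f} : InB k G Yf ω p e T f → InA k G Yf ω p e T f
  | S (l : Λ) : InA k G Yf ω p e T (Sel Yf ω p e l)
  | M (l : Λ) : InA k G Yf ω p e T (Mel Yf ω p e l)
  | add {f g} : InA k G Yf ω p e T f → InA k G Yf ω p e T g → InA k G Yf ω p e T (f + g)
  | smul (c : k) {f} : InA k G Yf ω p e T f → InA k G Yf ω p e T (c • f)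
  | mul {f g} : InA k G Yf ω p e T f → InA k G Yf ω p e T g →
      InA k G Yf ω p e T (conv Yf e f g)


section BLemmas

variable {k G R : Type*} {Λ : Type*} [Field k] [Group G] [Ring R] [Algebra k R]
  [MulSemiringAction G R] [SMulCommClass G k R]
  [Fintype Λ] [DecidableEq Λ]
  {Yf : Λ → Type*} [∀ l, Fintype (Yf l)] [∀ l, DecidableEq (Yf l)]
  [∀ l, MulAction G (Yf l)]
  {ω : Λ} {p : ∀ l, Yf ω → Yf l} {e : YS Yf → R} {T : Subring R}

theorem InB_zero : InB k G Yf ω p e T 0 := by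
  have h := InB.smul (0 : k) (InB.K (k := k) (G := G) (T := T) (p := p) (e := e) ω)
  rwa [zero_smul] at h

theorem InA_zero : InA k G Yf ω p e T 0 := by
  have h := InA.smul (0 : k) (InA.S (k := k) (G := G) (T := T) (p := p) (e := e) ω)
  rwa [zero_smul] at h

theorem InB_supp {f} (h : InB k G Yf ω p e T f) : LSupp ω f ∧ RSupp ω f := by
  induction h with
  | K l => exact ⟨lsupp_Kel l, rsupp_Kel l⟩
  | t t ht hT =>
      exact ⟨by rw [tEl_eq_diagEl]; exact lsupp_diagEl ω t,
        by rw [tEl_eq_diagEl]; exact rsupp_diagEl ω t⟩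
  | add hf hg ihf ihg => exact ⟨lsupp_add _ ihf.1 ihg.1, rsupp_add _ ihf.2 ihg.2⟩
  | smul c hf ih => exact ⟨lsupp_smul _ c ih.1, rsupp_smul _ c ih.2⟩
  | mul hf hg ihf ihg => exact ⟨lsupp_conv _ ihf.1 _, rsupp_conv _ _ ihg.2⟩

theorem InB_oneEl (hpid : ∀ x, p ω x = x) : InB k G Yf ω p e T (oneEl Yf e ω) := by
  have h := InB.K (k := k) (G := G) (T := T) (p := p) (e := e) ω
  rwa [Kel_omega hpid] at h

theorem InB_one_conv (heu : ∀ a, IsUnit (e a)) {f} (h : InB k G Yf ω p e T f) :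
    conv Yf e (oneEl Yf e ω) f = f :=
  oneEl_conv_of_lsupp heu (InB_supp h).1

theorem InB_conv_one (heu : ∀ a, IsUnit (e a)) {f} (h : InB k G Yf ω p e T f) :
    conv Yf e f (oneEl Yf e ω) = f :=
  conv_oneEl_of_rsupp heu (InB_supp h).2

theorem InB_tml
    (hpequiv : ∀ (l : Λ) (g : G) (x : Yf ω), p l (g • x) = g • p l x)
    (hee : ∀ (g : G) (l : Λ) (y : Yf l), e ⟨l, g • y⟩ = g • e ⟨l, y⟩)
    (heu : ∀ a, IsUnit (e a))
    (hm_unit : ∀ (l : Λ) (y : Yf l), IsUnit (mval Yf ω p e l y))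
    (hm_inv_T : ∀ (l : Λ) (y : Yf l), Ring.inverse (mval Yf ω p e l y) ∈ T)
    (l : Λ) :
    InB k G Yf ω p e T
      (tEl Yf ω e (fun x => Ring.inverse (mval Yf ω p e l (p l x)))) := by
  refine InB.t _ (fun g x => ?_) (fun x => hm_inv_T l (p l x))
  rw [hpequiv, mval_smul hpequiv hee heu,
    ← smul_ringInverse_s5 g (hm_unit l (p l x))]

end BLemmas


section SpanLemmas

variable {k G R : Type*} {Λ : Type*} [Field k] [Group G] [Ring R] [Algebra k R]
  [MulSemiringAction G R] [SMulCommClass G k R]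
  [Fintype Λ] [DecidableEq Λ]
  {Yf : Λ → Type*} [∀ l, Fintype (Yf l)] [∀ l, DecidableEq (Yf l)]
  [∀ l, MulAction G (Yf l)]
  {ω : Λ} {p : ∀ l, Yf ω → Yf l} {e : YS Yf → R} {T : Subring R}

theorem conv_mem_span_Sgen (heu : ∀ a, IsUnit (e a)) {x y : YS Yf → YS Yf → R}
    (hx : x ∈ Submodule.span k {x | ∃ l m b, InB k G Yf ω p e T b ∧
      x = conv Yf e (conv Yf e (Mel Yf ω p e l) b) (Sel Yf ω p e m)})
    (hy : y ∈ Submodule.span k {x | ∃ l m b, InB k G Yf ω p e T b ∧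
      x = conv Yf e (conv Yf e (Mel Yf ω p e l) b) (Sel Yf ω p e m)}) :
    conv Yf e x y ∈ Submodule.span k {x | ∃ l m b, InB k G Yf ω p e T b ∧
      x = conv Yf e (conv Yf e (Mel Yf ω p e l) b) (Sel Yf ω p e m)} := by
  induction hx using Submodule.span_induction with
  | mem x hxg =>
    induction hy using Submodule.span_induction with
    | mem y hyg =>
      obtain ⟨l, m, b, hb, rfl⟩ := hxg
      obtain ⟨l', m', b', hb', rfl⟩ := hyg
      by_cases hml : m = l'
      · subst hml
        refine Submodule.subset_span
          ⟨l, m', conv Yf e b (conv Yf e (Kel Yf ω p e m) b'),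
            InB.mul hb (InB.mul (InB.K m) hb'), ?_⟩
        simp only [conv_assoc]
        rw [← conv_assoc e (Sel Yf ω p e m) (Mel Yf ω p e m)
            (conv Yf e b' (Sel Yf ω p e m')),
          Sel_conv_Mel heu, if_pos rfl]
      · simp only [conv_assoc]
        rw [← conv_assoc e (Sel Yf ω p e m) (Mel Yf ω p e l')
            (conv Yf e b' (Sel Yf ω p e m')),
          Sel_conv_Mel heu, if_neg hml, conv_zero_left, conv_zero_right,
          conv_zero_right]
        exact Submodule.zero_mem _
    | zero => rw [conv_zero_right]; exact Submodule.zero_mem _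
    | add u v hu hv ihu ihv =>
        rw [conv_add_right]; exact Submodule.add_mem _ ihu ihv
    | smul c u hu ihu => rw [conv_smul_right]; exact Submodule.smul_mem _ c ihu
  | zero => rw [conv_zero_left]; exact Submodule.zero_mem _
  | add u v hu hv ihu ihv => rw [conv_add_left]; exact Submodule.add_mem _ ihu ihv
  | smul c u hu ihu => rw [conv_smul_left]; exact Submodule.smul_mem _ c ihu

theorem InA_mem_span_Sgen (hpid : ∀ x, p ω x = x) (heu : ∀ a, IsUnit (e a))
    {a : YS Yf → YS Yf → R} (ha : InA k G Yf ω p e T a) :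
    a ∈ Submodule.span k {x | ∃ l m b, InB k G Yf ω p e T b ∧
      x = conv Yf e (conv Yf e (Mel Yf ω p e l) b) (Sel Yf ω p e m)} := by
  induction ha with
  | ofB hb =>
    refine Submodule.subset_span ⟨ω, ω, _, hb, ?_⟩
    rw [Mel_omega hpid, Sel_omega hpid, InB_one_conv heu hb, InB_conv_one heu hb]
  | S l =>
    refine Submodule.subset_span ⟨ω, l, Kel Yf ω p e ω, InB.K ω, ?_⟩
    rw [Mel_omega hpid, Kel_omega hpid, oneEl_conv_oneEl heu,
      oneEl_conv_of_lsupp heu (lsupp_Sel l)]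
  | M l =>
    refine Submodule.subset_span ⟨l, ω, Kel Yf ω p e ω, InB.K ω, ?_⟩
    rw [Kel_omega hpid, Sel_omega hpid, conv_oneEl_of_rsupp heu (rsupp_Mel l),
      conv_oneEl_of_rsupp heu (rsupp_Mel l)]
  | add hf hg ihf ihg => exact Submodule.add_mem _ ihf ihg
  | smul c hf ih => exact Submodule.smul_mem _ c ih
  | mul hf hg ihf ihg => exact conv_mem_span_Sgen heu ihf ihg

theorem compress_mem_InB (hpid : ∀ x, p ω x = x) (heu : ∀ a, IsUnit (e a))
    {a : YS Yf → YS Yf → R} (ha : InA k G Yf ω p e T a) :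
    InB k G Yf ω p e T
      (conv Yf e (conv Yf e (oneEl Yf e ω) a) (oneEl Yf e ω)) := by
  have h := InA_mem_span_Sgen hpid heu ha
  clear ha
  induction h using Submodule.span_induction with
  | mem x hxg =>
    obtain ⟨l, m, b, hb, rfl⟩ := hxg
    simp only [conv_assoc]
    by_cases hm : m = ω
    · rw [hm]
      by_cases hl : l = ω
      · rw [hl]
        rw [Sel_omega hpid, oneEl_conv_oneEl heu, InB_conv_one heu hb,
          Mel_omega hpid, InB_one_conv heu hb, InB_one_conv heu hb]
        exact hb
      · rw [← conv_assoc e (oneEl Yf e ω) (Mel Yf ω p e l),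
          oneEl_conv_of_lsupp_ne heu (lsupp_Mel l) hl, conv_zero_left]
        exact InB_zero
    · rw [conv_oneEl_of_rsupp_ne heu (rsupp_Sel m) hm, conv_zero_right,
        conv_zero_right, conv_zero_right]
      exact InB_zero
  | zero =>
    rw [conv_zero_right, conv_zero_left]
    exact InB_zero
  | add u v hu hv ihu ihv =>
    rw [conv_add_right, conv_add_left]
    exact InB.add ihu ihv
  | smul c u hu ihu =>
    rw [conv_smul_right, conv_smul_left]
    exact InB.smul c ihu

/-- Part 3: `B^𝒯 = 1_ω * A^𝒯 * 1_ω`. -/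
theorem part3_lemma (hpid : ∀ x, p ω x = x) (heu : ∀ a, IsUnit (e a)) :
    ({x | InB k G Yf ω p e T x} =
      {x | ∃ a, InA k G Yf ω p e T a ∧
        x = conv Yf e (conv Yf e (oneEl Yf e ω) a) (oneEl Yf e ω)}) := by
  ext x
  constructor
  · intro hx
    exact ⟨x, InA.ofB hx, by rw [InB_one_conv heu hx, InB_conv_one heu hx]⟩
  · rintro ⟨a, ha, rfl⟩
    exact compress_mem_InB hpid heu ha

theorem mem_C_InA (hpid : ∀ x, p ω x = x) {c : YS Yf → YS Yf → R}
    (hc : c ∈ Submodule.span k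
      {x | ∃ a, InA k G Yf ω p e T a ∧ x = conv Yf e a (oneEl Yf e ω)}) :
    InA k G Yf ω p e T c := by
  induction hc using Submodule.span_induction with
  | mem x hxg =>
    obtain ⟨a, ha, rfl⟩ := hxg
    exact InA.mul ha (InA.ofB (InB_oneEl hpid))
  | zero => exact InA_zero
  | add u v hu hv ihu ihv => exact InA.add ihu ihv
  | smul c u hu ihu => exact InA.smul c ihu

theorem mem_C_conv_one (heu : ∀ a, IsUnit (e a)) {c : YS Yf → YS Yf → R}
    (hc : c ∈ Submodule.span k
      {x | ∃ a, InA k G Yf ω p e T a ∧ x = conv Yf e a (oneEl Yf e ω)}) :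
    conv Yf e c (oneEl Yf e ω) = c := by
  induction hc using Submodule.span_induction with
  | mem x hxg =>
    obtain ⟨a, ha, rfl⟩ := hxg
    rw [conv_assoc, oneEl_conv_oneEl heu]
  | zero => rw [conv_zero_left]
  | add u v hu hv ihu ihv => rw [conv_add_left, ihu, ihv]
  | smul c u hu ihu => rw [conv_smul_left, ihu]

theorem oneEl_mem_C (hpid : ∀ x, p ω x = x) (heu : ∀ a, IsUnit (e a)) :
    oneEl Yf e ω ∈ Submodule.span k
      {x | ∃ a, InA k G Yf ω p e T a ∧ x = conv Yf e a (oneEl Yf e ω)} :=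
  Submodule.subset_span
    ⟨oneEl Yf e ω, InA.ofB (InB_oneEl hpid), (oneEl_conv_oneEl heu ω).symm⟩

theorem Mel_mem_C (heu : ∀ a, IsUnit (e a)) (l : Λ) :
    Mel Yf ω p e l ∈ Submodule.span k
      {x | ∃ a, InA k G Yf ω p e T a ∧ x = conv Yf e a (oneEl Yf e ω)} :=
  Submodule.subset_span
    ⟨Mel Yf ω p e l, InA.M l, (conv_oneEl_of_rsupp heu (rsupp_Mel l)).symm⟩

theorem Mel_conv_mem_C (heu : ∀ a, IsUnit (e a)) (l : Λ)
    {b : YS Yf → YS Yf → R} (hb : InB k G Yf ω p e T b) :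
    conv Yf e (Mel Yf ω p e l) b ∈ Submodule.span k
      {x | ∃ a, InA k G Yf ω p e T a ∧ x = conv Yf e a (oneEl Yf e ω)} :=
  Submodule.subset_span
    ⟨conv Yf e (Mel Yf ω p e l) b, InA.mul (InA.M l) (InA.ofB hb),
      by rw [conv_assoc, InB_conv_one heu hb]⟩

theorem mem_C_span_Mb (hpid : ∀ x, p ω x = x) (heu : ∀ a, IsUnit (e a))
    {c : YS Yf → YS Yf → R}
    (hc : c ∈ Submodule.span k
      {x | ∃ a, InA k G Yf ω p e T a ∧ x = conv Yf e a (oneEl Yf e ω)}) :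
    c ∈ Submodule.span k {x | ∃ l b, InB k G Yf ω p e T b ∧
      x = conv Yf e (Mel Yf ω p e l) b} := by
  induction hc using Submodule.span_induction with
  | mem x hxg =>
    obtain ⟨a, ha, rfl⟩ := hxg
    have h := InA_mem_span_Sgen (k := k) (G := G) (T := T) hpid heu ha
    clear ha
    induction h using Submodule.span_induction with
    | mem u hug =>
      obtain ⟨l, m, b, hb, rfl⟩ := hug
      rw [conv_assoc, conv_assoc]
      by_cases hm : m = ω
      · rw [hm]
        rw [Sel_omega hpid, oneEl_conv_oneEl heu, InB_conv_one heu hb]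
        exact Submodule.subset_span ⟨l, b, hb, rfl⟩
      · rw [conv_oneEl_of_rsupp_ne heu (rsupp_Sel m) hm, conv_zero_right,
          conv_zero_right]
        exact Submodule.zero_mem _
    | zero => rw [conv_zero_left]; exact Submodule.zero_mem _
    | add u v hu hv ihu ihv =>
        rw [conv_add_left]; exact Submodule.add_mem _ ihu ihv
    | smul c u hu ihu => rw [conv_smul_left]; exact Submodule.smul_mem _ c ihu
  | zero => exact Submodule.zero_mem _
  | add u v hu hv ihu ihv => exact Submodule.add_mem _ ihu ihv
  | smul c u hu ihu => exact Submodule.smul_mem _ c ihu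

end SpanLemmas

theorem stmt5 (k : Type*) {G R : Type*} {Λ : Type*} [Field k] [Group G] [Fintype G]
    [Ring R] [Algebra k R] [MulSemiringAction G R] [SMulCommClass G k R]
    [Fintype Λ] [DecidableEq Λ]
    (Yf : Λ → Type*) [∀ l, Fintype (Yf l)] [∀ l, DecidableEq (Yf l)]
    [∀ l, MulAction G (Yf l)]
    (ω : Λ) (p : ∀ l, Yf ω → Yf l)
    (hpid : ∀ x, p ω x = x)
    (hpsurj : ∀ l, Function.Surjective (p l))
    (hpequiv : ∀ (l : Λ) (g : G) (x : Yf ω), p l (g • x) = g • p l x)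
    (e : YS Yf → R)
    (hee : ∀ (g : G) (l : Λ) (y : Yf l), e ⟨l, g • y⟩ = g • e ⟨l, y⟩)
    (heu : ∀ a, IsUnit (e a))
    -- `𝒯 ⊆ R` is a `G`-stable subring
    (T : Subring R) (hTg : ∀ (g : G) (r : R), r ∈ T → g • r ∈ T)
    -- all values `m(y)` are invertible and central, with `m(y)^{±1} ∈ 𝒯`
    (hm_unit : ∀ (l : Λ) (y : Yf l), IsUnit (mval Yf ω p e l y))
    (hm_central : ∀ (l : Λ) (y : Yf l) (r : R),
        mval Yf ω p e l y * r = r * mval Yf ω p e l y)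
    (hm_T : ∀ (l : Λ) (y : Yf l), mval Yf ω p e l y ∈ T)
    (hm_inv_T : ∀ (l : Λ) (y : Yf l), Ring.inverse (mval Yf ω p e l y) ∈ T) :
    -- `C^𝒯 = A^𝒯 * 1_ω`
    letI Csub : Submodule k (YS Yf → YS Yf → R) :=
      Submodule.span k
        {x | ∃ a, InA k G Yf ω p e T a ∧ x = conv Yf e a (oneEl Yf e ω)}
    -- (1) every endomorphism of `C^𝒯` as a left `A^𝒯`-module is right convolution
    --     with a unique element of `B^𝒯`
    (∀ φ : Csub →ₗ[k] Csub,
      (∀ a, InA k G Yf ω p e T a → ∀ (c : YS Yf → YS Yf → R) (hc : c ∈ Csub)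
        (hac : conv Yf e a c ∈ Csub),
          (φ ⟨conv Yf e a c, hac⟩ : YS Yf → YS Yf → R) =
            conv Yf e a (φ ⟨c, hc⟩)) →
      ∃! b : YS Yf → YS Yf → R, InB k G Yf ω p e T b ∧
        ∀ (c : YS Yf → YS Yf → R) (hc : c ∈ Csub),
          (φ ⟨c, hc⟩ : YS Yf → YS Yf → R) = conv Yf e c b) ∧
    -- (2) every endomorphism of `C^𝒯` as a right `B^𝒯`-module is left convolution
    --     with a unique element of `A^𝒯`
    (∀ ψ : Csub →ₗ[k] Csub,
      (∀ b, InB k G Yf ω p e T b → ∀ (c : YS Yf → YS Yf → R) (hc : c ∈ Csub)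
        (hcb : conv Yf e c b ∈ Csub),
          (ψ ⟨conv Yf e c b, hcb⟩ : YS Yf → YS Yf → R) =
            conv Yf e (ψ ⟨c, hc⟩) b) →
      ∃! a : YS Yf → YS Yf → R, InA k G Yf ω p e T a ∧
        ∀ (c : YS Yf → YS Yf → R) (hc : c ∈ Csub),
          (ψ ⟨c, hc⟩ : YS Yf → YS Yf → R) = conv Yf e a c) ∧
    -- moreover `B^𝒯 = 1_ω * A^𝒯 * 1_ω`
    ({x | InB k G Yf ω p e T x} =
      {x | ∃ a, InA k G Yf ω p e T a ∧
        x = conv Yf e (conv Yf e (oneEl Yf e ω) a) (oneEl Yf e ω)}) := by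
  have h1C : oneEl Yf e ω ∈ Submodule.span k
      {x | ∃ a, InA k G Yf ω p e T a ∧ x = conv Yf e a (oneEl Yf e ω)} :=
    oneEl_mem_C hpid heu
  refine ⟨?_, ?_, part3_lemma hpid heu⟩
  · -- Part 1
    intro φ hφ
    have hb0mem := (φ ⟨oneEl Yf e ω, h1C⟩).2
    set b0 : YS Yf → YS Yf → R := (φ ⟨oneEl Yf e ω, h1C⟩ : YS Yf → YS Yf → R)
      with hb0def
    have hphi : ∀ (c) (hc : c ∈ Submodule.span k
        {x | ∃ a, InA k G Yf ω p e T a ∧ x = conv Yf e a (oneEl Yf e ω)}),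
        (φ ⟨c, hc⟩ : YS Yf → YS Yf → R) = conv Yf e c b0 := by
      intro c hc
      have hcA := mem_C_InA hpid hc
      have hc1 : conv Yf e c (oneEl Yf e ω) = c := mem_C_conv_one heu hc
      have hcc : conv Yf e c (oneEl Yf e ω) ∈ Submodule.span k
          {x | ∃ a, InA k G Yf ω p e T a ∧ x = conv Yf e a (oneEl Yf e ω)} := by
        rw [hc1]; exact hc
      have h := hφ c hcA (oneEl Yf e ω) h1C hcc
      rwa [show (⟨conv Yf e c (oneEl Yf e ω), hcc⟩ :
          Submodule.span k {x | ∃ a, InA k G Yf ω p e T a ∧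
            x = conv Yf e a (oneEl Yf e ω)}) = ⟨c, hc⟩ from Subtype.ext hc1] at h
    refine ⟨conv Yf e (conv Yf e (oneEl Yf e ω) b0) (oneEl Yf e ω),
      ⟨compress_mem_InB hpid heu (mem_C_InA hpid hb0mem), ?_⟩, ?_⟩
    · intro c hc
      rw [hphi c hc, ← conv_assoc, ← conv_assoc, mem_C_conv_one heu hc,
        ← hphi c hc, mem_C_conv_one heu (φ ⟨c, hc⟩).2, hphi c hc]
    · rintro b' ⟨hb'B, hb'prop⟩
      have hb0b' : b0 = b' := by
        rw [← InB_one_conv heu hb'B]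
        exact hb'prop _ h1C
      rw [hb0b', InB_one_conv heu hb'B, InB_conv_one heu hb'B]
  · -- Part 2
    intro ψ hψ
    have hMmem : ∀ l, Mel Yf ω p e l ∈ Submodule.span k
        {x | ∃ a, InA k G Yf ω p e T a ∧ x = conv Yf e a (oneEl Yf e ω)} :=
      fun l => Mel_mem_C heu l
    set cfun : Λ → (YS Yf → YS Yf → R) :=
      fun l => (ψ ⟨Mel Yf ω p e l, hMmem l⟩ : YS Yf → YS Yf → R) with hcfun
    have hcmem : ∀ l, cfun l ∈ Submodule.span k
        {x | ∃ a, InA k G Yf ω p e T a ∧ x = conv Yf e a (oneEl Yf e ω)} :=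
      fun l => (ψ ⟨Mel Yf ω p e l, hMmem l⟩).2
    have hKmlB : ∀ l, InB k G Yf ω p e T
        (conv Yf e (Kel Yf ω p e l)
          (tEl Yf ω e (fun x => Ring.inverse (mval Yf ω p e l (p l x))))) :=
      fun l => InB.mul (InB.K l) (InB_tml hpequiv hee heu hm_unit hm_inv_T l)
    have hMK : ∀ l, conv Yf e (Mel Yf ω p e l)
        (conv Yf e (Kel Yf ω p e l)
          (tEl Yf ω e (fun x => Ring.inverse (mval Yf ω p e l (p l x))))) =
        Mel Yf ω p e l := fun l => Mel_absorb heu hm_unit l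
    have hcK : ∀ l, conv Yf e (cfun l)
        (conv Yf e (Kel Yf ω p e l)
          (tEl Yf ω e (fun x => Ring.inverse (mval Yf ω p e l (p l x))))) =
        cfun l := by
      intro l
      have hmem2 : conv Yf e (Mel Yf ω p e l)
          (conv Yf e (Kel Yf ω p e l)
            (tEl Yf ω e (fun x => Ring.inverse (mval Yf ω p e l (p l x))))) ∈
          Submodule.span k {x | ∃ a, InA k G Yf ω p e T a ∧
            x = conv Yf e a (oneEl Yf e ω)} := by
        rw [hMK l]; exact hMmem l
      have h := hψ _ (hKmlB l) (Mel Yf ω p e l) (hMmem l) hmem2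
      rw [show (⟨_, hmem2⟩ : Submodule.span k {x | ∃ a, InA k G Yf ω p e T a ∧
          x = conv Yf e a (oneEl Yf e ω)}) = ⟨Mel Yf ω p e l, hMmem l⟩ from
        Subtype.ext (hMK l)] at h
      exact h.symm
    set aEl : YS Yf → YS Yf → R := ∑ l : Λ, conv Yf e (cfun l)
      (conv Yf e (tEl Yf ω e (fun x => Ring.inverse (mval Yf ω p e l (p l x))))
        (Sel Yf ω p e l)) with haEl
    have haA : InA k G Yf ω p e T aEl := by
      rw [haEl]
      refine Finset.sum_induction _ _ (fun x y hx hy => InA.add hx hy) InA_zero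
        fun l _ => ?_
      exact InA.mul (mem_C_InA hpid (hcmem l))
        (InA.mul (InA.ofB (InB_tml hpequiv hee heu hm_unit hm_inv_T l)) (InA.S l))
    have haM : ∀ l, conv Yf e aEl (Mel Yf ω p e l) = cfun l := by
      intro l
      rw [haEl, conv_sum_left, Finset.sum_eq_single l]
      · simp only [conv_assoc]
        rw [Sel_conv_Mel heu, if_pos rfl, tml_comm heu hm_unit hm_central l]
        exact hcK l
      · intro m _ hm
        simp only [conv_assoc]
        rw [Sel_conv_Mel heu, if_neg hm, conv_zero_right, conv_zero_right]
      · intro h; exact absurd (Finset.mem_univ _) h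
    have hsub : Submodule.span k {x | ∃ l b, InB k G Yf ω p e T b ∧
        x = conv Yf e (Mel Yf ω p e l) b} ≤ Submodule.span k
        {x | ∃ a, InA k G Yf ω p e T a ∧ x = conv Yf e a (oneEl Yf e ω)} := by
      rw [Submodule.span_le]
      rintro x ⟨l, b, hb, rfl⟩
      exact Mel_conv_mem_C heu l hb
    have hMbval : ∀ u, u ∈ Submodule.span k {x | ∃ l b, InB k G Yf ω p e T b ∧
        x = conv Yf e (Mel Yf ω p e l) b} →
        ∀ hc : u ∈ Submodule.span k {x | ∃ a, InA k G Yf ω p e T a ∧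
          x = conv Yf e a (oneEl Yf e ω)},
        (ψ ⟨u, hc⟩ : YS Yf → YS Yf → R) = conv Yf e aEl u := by
      intro u hu
      induction hu using Submodule.span_induction with
      | mem x hxg =>
        intro hc
        obtain ⟨l, b, hb, rfl⟩ := hxg
        have h := hψ b hb (Mel Yf ω p e l) (hMmem l) hc
        rw [h, ← conv_assoc, haM l]
      | zero =>
        intro hc
        have h0 : (⟨0, hc⟩ : Submodule.span k {x | ∃ a, InA k G Yf ω p e T a ∧
            x = conv Yf e a (oneEl Yf e ω)}) = 0 := Subtype.ext rfl
        rw [h0, map_zero, conv_zero_right]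
        rfl
      | add u v hu hv ihu ihv =>
        intro hc
        have hu' := hsub hu
        have hv' := hsub hv
        have hsplit : (⟨u + v, hc⟩ : Submodule.span k
            {x | ∃ a, InA k G Yf ω p e T a ∧ x = conv Yf e a (oneEl Yf e ω)}) =
            ⟨u, hu'⟩ + ⟨v, hv'⟩ := Subtype.ext rfl
        rw [hsplit, map_add, Submodule.coe_add, ihu hu', ihv hv', conv_add_right]
      | smul c u hu ihu =>
        intro hc
        have hu' := hsub hu
        have hsplit : (⟨c • u, hc⟩ : Submodule.span k
            {x | ∃ a, InA k G Yf ω p e T a ∧ x = conv Yf e a (oneEl Yf e ω)}) =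
            c • ⟨u, hu'⟩ := Subtype.ext rfl
        rw [hsplit, map_smul, Submodule.coe_smul, ihu hu', conv_smul_right]
    have hψval : ∀ (c) (hc : c ∈ Submodule.span k
        {x | ∃ a, InA k G Yf ω p e T a ∧ x = conv Yf e a (oneEl Yf e ω)}),
        (ψ ⟨c, hc⟩ : YS Yf → YS Yf → R) = conv Yf e aEl c :=
      fun c hc => hMbval c (mem_C_span_Mb hpid heu hc) hc
    refine ⟨aEl, ⟨haA, hψval⟩, ?_⟩
    rintro a' ⟨ha'A, ha'prop⟩
    have hM' : ∀ l, conv Yf e a' (Mel Yf ω p e l) =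
        conv Yf e aEl (Mel Yf ω p e l) := fun l =>
      (ha'prop (Mel Yf ω p e l) (hMmem l)).symm.trans (hψval (Mel Yf ω p e l) (hMmem l))
    calc a' = ∑ l, conv Yf e a' (oneEl Yf e l) := (sum_conv_oneEl heu a').symm
      _ = ∑ l, conv Yf e aEl (oneEl Yf e l) := by
          refine Finset.sum_congr rfl fun l _ => ?_
          rw [oneEl_eq_MSD heu hm_unit l, ← conv_assoc, hM' l, conv_assoc,
            ← oneEl_eq_MSD heu hm_unit l]
      _ = aEl := sum_conv_oneEl heu aEl
end

section
/- Let X = G, acting on itself by left multiplication, and let e be a twist on G. For g ∈ G and r ∈ R define ξ_{g,r} : G×G → R by ξ_{g,r}(x,y) = δ_{y,xg}·e(x)·x(r). Then each ξ_{g,r} belongs to R_G(G×G), and for all g, g' ∈ G and r, r' ∈ R one has ξ_{g,r} * ξ_{g',r'} = ξ_{gg', r·g(r')} in the twisted convolution algebra R_G(G×G). -/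
/-!
The elements `ξ_{g,r}(x,y) = δ_{y,xg}·e(x)·x(r)` of the twisted convolution algebra
`R_G(G×G)` (with `G` acting on itself by left multiplication) are equivariant
and multiply by `ξ_{g,r} * ξ_{g',r'} = ξ_{gg', r·g(r')}`.
-/

open Finset

/-- `ξ_{g,r}(x,y) = δ_{y,xg}·e(x)·x(r)`. -/
noncomputable def xiEl {G R : Type*} [Group G] [DecidableEq G] [Ring R]
    [MulSemiringAction G R] (e : G → R) (g : G) (r : R) : G → G → R :=
  fun x y => if y = x * g then e x * (x • r) else 0

theorem stmt7 {k G R : Type*} [Field k] [Group G] [Fintype G] [DecidableEq G]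
    [Ring R] [Algebra k R] [MulSemiringAction G R] [SMulCommClass G k R]
    (e : G → R) (heq : ∀ h x : G, e (h • x) = h • e x) (hu : ∀ x, IsUnit (e x))
    (g g' : G) (r r' : R) :
    -- `ξ_{g,r}` is `G`-equivariant (for the left-multiplication action of `G` on itself)
    (∀ h x y : G, xiEl e g r (h • x) (h • y) = h • xiEl e g r x y) ∧
    -- the twisted convolution product formula
    (∀ x y : G,
      (∑ z, xiEl e g r x z * Ring.inverse (e z) * xiEl e g' r' z y) =
        xiEl e (g * g') (r * (g • r')) x y) := by
  constructor
  · intro h x y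
    simp only [xiEl, smul_eq_mul]
    by_cases hy : y = x * g
    · rw [if_pos (by rw [hy, mul_assoc]), if_pos hy, smul_mul', ← heq h x, mul_smul]
      rfl
    · rw [if_neg (fun hc => hy (mul_left_cancel (by rwa [mul_assoc] at hc))),
        if_neg hy, smul_zero]
  · intro x y
    rw [Finset.sum_eq_single (x * g)]
    · rw [show xiEl e g r x (x * g) = e x * (x • r) from if_pos rfl]
      by_cases hy : y = x * g * g'
      · rw [show xiEl e g' r' (x * g) y = e (x * g) * ((x * g) • r') from if_pos hy,
          show xiEl e (g * g') (r * (g • r')) x y = e x * (x • (r * g • r')) from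
            if_pos (hy.trans (mul_assoc x g g')),
          mul_assoc (e x * (x • r)), ← mul_assoc (Ring.inverse (e (x * g))),
          Ring.inverse_mul_cancel _ (hu (x * g)), one_mul, mul_smul,
          smul_mul' x r (g • r'), mul_assoc]
      · rw [show xiEl e g' r' (x * g) y = 0 from if_neg hy, mul_zero,
          show xiEl e (g * g') (r * (g • r')) x y = 0 from
            if_neg (fun h => hy (h.trans (mul_assoc x g g').symm))]
    · intro z _ hz
      simp [xiEl, if_neg hz]
    · intro h; exact absurd (Finset.mem_univ _) h
end

section
/- Let β ∈ (F⊗F)[x₁,x₂] be a polynomial all of whose coefficients are weak Frobenius elements of F⊗F. Then: (i) for every f ∈ F⊗F (viewed as a constant polynomial), β·f = σ(f)·β; (ii) for every a ∈ (F⊗F)[x₁,x₂], the element β·a − σ(a)·β is divisible by x₁ − x₂ in (F⊗F)[x₁,x₂]. Consequently, since x₁ − x₂ is not a zero divisor in (F⊗F)[x₁,x₂], there is a unique 𝕜-linear map ∂^β : (F⊗F)[x₁,x₂] → (F⊗F)[x₁,x₂] satisfying (x₁ − x₂)·∂^β(a) = β·a − σ(a)·β for all a. -/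
/-!
Existence and uniqueness of the β-twisted Demazure operator `∂^β` on
`(F⊗F)[x₁,x₂]`, for `β` with weak Frobenius coefficients.  We model the
(noncommutative) polynomial ring `(F⊗F)[x₁,x₂]` as `(F ⊗[k] F) ⊗[k] k[x₁,x₂]`.
-/

open scoped TensorProduct
open MvPolynomial

variable (k F : Type*)

/-- Weak Frobenius elements of `F ⊗ F`: `(a⊗b)·Δ = Δ·(b⊗a)` for all `a, b ∈ F`. -/
def IsWeakFrobenius [CommSemiring k] [Ring F] [Algebra k F] (Δ : F ⊗[k] F) : Prop :=
  ∀ a b : F, (a ⊗ₜ[k] b) * Δ = Δ * (b ⊗ₜ[k] a)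

/-- The polynomial ring `(F⊗F)[x₁,x₂]`, modelled as `(F⊗F) ⊗ 𝕜[x₁,x₂]`. -/
abbrev PolyFF (k F : Type*) [CommSemiring k] [Ring F] [Algebra k F] :=
  (F ⊗[k] F) ⊗[k] MvPolynomial (Fin 2) k

/-- The automorphism `σ` of `(F⊗F)[x₁,x₂]` flipping the two tensor factors
and interchanging `x₁` and `x₂`. -/
noncomputable def sigmaP [CommSemiring k] [Ring F] [Algebra k F] :
    PolyFF k F ≃ₐ[k] PolyFF k F :=
  Algebra.TensorProduct.congr (Algebra.TensorProduct.comm k F F)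
    (MvPolynomial.renameEquiv k (Equiv.swap (0 : Fin 2) 1))

/-- The element `x₁ - x₂` of `(F⊗F)[x₁,x₂]`. -/
noncomputable def xdiff [CommRing k] [Ring F] [Algebra k F] : PolyFF k F :=
  (1 : F ⊗[k] F) ⊗ₜ[k] ((X (0 : Fin 2) : MvPolynomial (Fin 2) k) - (X (1 : Fin 2) : MvPolynomial (Fin 2) k))


section Aux
variable {k F : Type*}

lemma wf_mul [CommSemiring k] [Ring F] [Algebra k F] {Δ : F ⊗[k] F}
    (h : IsWeakFrobenius k F Δ) (f : F ⊗[k] F) :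
    Δ * f = (Algebra.TensorProduct.comm k F F f) * Δ := by
  induction f using TensorProduct.induction_on with
  | zero => simp
  | tmul a b => simpa using (h b a).symm
  | add x y hx hy => simp [mul_add, add_mul, hx, hy]

lemma right_central [CommSemiring k] [Ring F] [Algebra k F]
    (q : MvPolynomial (Fin 2) k) (z : PolyFF k F) :
    z * ((1 : F ⊗[k] F) ⊗ₜ[k] q) = ((1 : F ⊗[k] F) ⊗ₜ[k] q) * z := by
  induction z using TensorProduct.induction_on with
  | zero => simp
  | tmul a b => simp [Algebra.TensorProduct.tmul_mul_tmul, mul_comm]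
  | add x y hx hy => simp [mul_add, add_mul, hx, hy]

lemma dvd_sub_swap [CommRing k] (p : MvPolynomial (Fin 2) k) :
    (X (0:Fin 2) - X 1 : MvPolynomial (Fin 2) k) ∣
      (p - rename (Equiv.swap (0:Fin 2) 1) p) := by
  induction p using MvPolynomial.induction_on with
  | C a => simp
  | add p q hp hq =>
      rw [map_add]
      have e : p + q - (rename (Equiv.swap (0:Fin 2) 1) p + rename (Equiv.swap (0:Fin 2) 1) q)
          = (p - rename (Equiv.swap (0:Fin 2) 1) p) + (q - rename (Equiv.swap (0:Fin 2) 1) q) := by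
        ring
      rw [e]; exact dvd_add hp hq
  | mul_X p n hp =>
      rw [map_mul, rename_X]
      have e : p * X n - rename (Equiv.swap (0:Fin 2) 1) p * X ((Equiv.swap (0:Fin 2) 1) n)
          = (p - rename (Equiv.swap (0:Fin 2) 1) p) * X n
            + rename (Equiv.swap (0:Fin 2) 1) p * (X n - X ((Equiv.swap (0:Fin 2) 1) n)) := by
        ring
      rw [e]
      refine dvd_add (hp.mul_right _) (Dvd.dvd.mul_left ?_ _)
      fin_cases n
      · simp only [Fin.isValue, Equiv.swap_apply_left]
        exact dvd_rfl
      · simp only [Fin.isValue, Equiv.swap_apply_right]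
        exact dvd_sub_comm.mp dvd_rfl

end Aux

section Aux2
variable {k F : Type*}

lemma sigmaP_tmul [CommSemiring k] [Ring F] [Algebra k F]
    (f : F ⊗[k] F) (p : MvPolynomial (Fin 2) k) :
    sigmaP k F (f ⊗ₜ[k] p) =
      (Algebra.TensorProduct.comm k F F f) ⊗ₜ[k] (rename (Equiv.swap (0:Fin 2) 1) p) := by
  simp [sigmaP, Algebra.TensorProduct.congr_apply, Algebra.TensorProduct.map_tmul]

lemma xdiff_regular [Field k] [Ring F] [Algebra k F] {u v : PolyFF k F}
    (h : xdiff k F * u = xdiff k F * v) : u = v := by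
  have hne : (X (0:Fin 2) - X 1 : MvPolynomial (Fin 2) k) ≠ 0 :=
    sub_ne_zero_of_ne (by
      intro hX
      have := MvPolynomial.X_injective (R := k) hX
      exact (by decide : (0:Fin 2) ≠ 1) this)
  have hinj : Function.Injective
      (LinearMap.mulLeft k (X (0:Fin 2) - X 1 : MvPolynomial (Fin 2) k)) := by
    intro a b hab
    exact mul_left_cancel₀ hne hab
  have key : ∀ w : PolyFF k F, xdiff k F * w =
      (LinearMap.lTensor (F ⊗[k] F)
        (LinearMap.mulLeft k (X (0:Fin 2) - X 1 : MvPolynomial (Fin 2) k))) w := by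
    intro w
    induction w using TensorProduct.induction_on with
    | zero => simp
    | tmul a b => simp [xdiff, Algebra.TensorProduct.tmul_mul_tmul]
    | add x y hx hy => simp [mul_add, hx, hy]
  exact Module.Flat.lTensor_preserves_injective_linearMap _ hinj (by rw [← key, ← key, h])

end Aux2
set_option maxHeartbeats 1000000 in
theorem stmt9 [Field k] [Ring F] [Algebra k F] [FiniteDimensional k F]
    (β : PolyFF k F)
    -- `β` is a polynomial all of whose coefficients are weak Frobenius
    (s : Finset (Fin 2 →₀ ℕ)) (cf : (Fin 2 →₀ ℕ) → F ⊗[k] F)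
    (hwf : ∀ mo, IsWeakFrobenius k F (cf mo))
    (hβ : β = ∑ mo ∈ s, (cf mo) ⊗ₜ[k] (MvPolynomial.monomial mo (1 : k))) :
    -- (i) for every `f ∈ F⊗F` (as a constant polynomial), `β·f = σ(f)·β`
    (∀ f : F ⊗[k] F,
      β * (f ⊗ₜ[k] (1 : MvPolynomial (Fin 2) k)) =
        (((Algebra.TensorProduct.comm k F F) f) ⊗ₜ[k] (1 : MvPolynomial (Fin 2) k)) * β) ∧
    -- (ii) `β·a − σ(a)·β` is divisible by `x₁ − x₂` for every `a`
    (∀ a : PolyFF k F, xdiff k F ∣ (β * a - (sigmaP k F) a * β)) ∧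
    -- hence there is a unique 𝕜-linear map `∂^β` with
    -- `(x₁ − x₂)·∂^β(a) = β·a − σ(a)·β` for all `a`
    (∃! D : PolyFF k F →ₗ[k] PolyFF k F,
      ∀ a : PolyFF k F, xdiff k F * D a = β * a - (sigmaP k F) a * β) := by
  have hi : ∀ f : F ⊗[k] F,
      β * (f ⊗ₜ[k] (1 : MvPolynomial (Fin 2) k)) =
        (((Algebra.TensorProduct.comm k F F) f) ⊗ₜ[k] (1 : MvPolynomial (Fin 2) k)) * β := by
    intro f
    rw [hβ, Finset.sum_mul, Finset.mul_sum]
    refine Finset.sum_congr rfl fun mo _ => ?_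
    rw [Algebra.TensorProduct.tmul_mul_tmul, Algebra.TensorProduct.tmul_mul_tmul,
      mul_one, one_mul, wf_mul (hwf mo) f]
  have hii : ∀ a : PolyFF k F, xdiff k F ∣ (β * a - (sigmaP k F) a * β) := by
    intro a
    induction a using TensorProduct.induction_on with
    | zero => simp
    | add x y hx hy =>
        rw [map_add]
        have e : β * (x + y) - (sigmaP k F x + sigmaP k F y) * β
            = (β * x - sigmaP k F x * β) + (β * y - sigmaP k F y * β) := by
          rw [mul_add, add_mul]; abel
        rw [e]; exact dvd_add hx hy
    | tmul f p =>
        obtain ⟨q, hq⟩ := dvd_sub_swap (k := k) p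
        rw [sigmaP_tmul]
        set f' := (Algebra.TensorProduct.comm k F F) f with hf'
        set p' := rename (Equiv.swap (0:Fin 2) 1) p with hp'
        have e1 : (f ⊗ₜ[k] p : PolyFF k F) = (f ⊗ₜ[k] 1) * ((1:F ⊗[k] F) ⊗ₜ[k] p) := by
          rw [Algebra.TensorProduct.tmul_mul_tmul, mul_one, one_mul]
        have e2 : (f' ⊗ₜ[k] p' : PolyFF k F) = (f' ⊗ₜ[k] 1) * ((1:F ⊗[k] F) ⊗ₜ[k] p') := by
          rw [Algebra.TensorProduct.tmul_mul_tmul, mul_one, one_mul]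
        have hb1 : β * (f ⊗ₜ[k] p)
            = (f' ⊗ₜ[k] (1:MvPolynomial (Fin 2) k)) * (((1:F ⊗[k] F) ⊗ₜ[k] p) * β) := by
          rw [e1, ← mul_assoc, hi f, ← hf', mul_assoc, right_central p β]
        have hb2 : (f' ⊗ₜ[k] p') * β
            = (f' ⊗ₜ[k] (1:MvPolynomial (Fin 2) k)) * (((1:F ⊗[k] F) ⊗ₜ[k] p') * β) := by
          rw [e2, mul_assoc]
        have key : β * (f ⊗ₜ[k] p) - (f' ⊗ₜ[k] p') * β
            = (f' ⊗ₜ[k] (1:MvPolynomial (Fin 2) k)) * (((1:F ⊗[k] F) ⊗ₜ[k] (p - p')) * β) := by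
          rw [hb1, hb2, ← mul_sub, ← sub_mul, ← TensorProduct.tmul_sub]
        rw [key, hq]
        have e3 : ((1:F ⊗[k] F) ⊗ₜ[k] ((X (0:Fin 2) - X 1) * q) : PolyFF k F)
            = xdiff k F * ((1:F ⊗[k] F) ⊗ₜ[k] q) := by
          rw [xdiff, Algebra.TensorProduct.tmul_mul_tmul, mul_one]
        have hc : ∀ z : PolyFF k F, z * xdiff k F = xdiff k F * z := fun z =>
          right_central (X (0:Fin 2) - X 1) z
        refine ⟨(f' ⊗ₜ[k] (1:MvPolynomial (Fin 2) k)) * (((1:F ⊗[k] F) ⊗ₜ[k] q) * β), ?_⟩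
        rw [e3, ← mul_assoc, ← mul_assoc, hc, mul_assoc, mul_assoc]
  have hex : ∀ a : PolyFF k F, ∃ u, xdiff k F * u = β * a - (sigmaP k F) a * β := by
    intro a
    obtain ⟨u, hu⟩ := hii a
    exact ⟨u, hu.symm⟩
  choose D0 hD0 using hex
  refine ⟨hi, hii, ⟨⟨⟨D0, ?_⟩, ?_⟩, hD0, ?_⟩⟩
  · intro x y
    apply xdiff_regular (k := k) (F := F)
    show xdiff k F * D0 (x + y) = xdiff k F * (D0 x + D0 y)
    rw [mul_add, hD0, hD0, hD0, map_add, add_mul, mul_add]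
    abel
  · intro c x
    apply xdiff_regular (k := k) (F := F)
    show xdiff k F * D0 (c • x) = xdiff k F * (c • D0 x)
    rw [hD0, map_smul, mul_smul_comm, smul_mul_assoc, mul_smul_comm, hD0, smul_sub]
  · intro D' hD'
    refine LinearMap.ext fun a => ?_
    apply xdiff_regular (k := k) (F := F)
    show xdiff k F * D' a = xdiff k F * D0 a
    rw [hD' a, hD0]
end
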